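/- arXiv:2309.12843 — 2 statements merged into one kernel-verified Lean document; each statement's English description precedes it below -/
import Mathlib

section
/- Let k ≥ 1 and m ≥ 1 be integers with m/2 < z_k(m) < m. Then there exists a prime p not dividing k(k+1) such that z_k(m) = m(p+1)/(2p), z_k(p) = (p+1)/2 and e_p(k) = −1. Moreover, m can be written as m = a·p^b with a ∈ P(k(k+1)), z_k(a) = a, gcd(a, p(p+1)/2) = 1 and b ≥ 1; and if b ≥ 2, then z_k(p²) = p(p+1)/2. -/
/-- The Shallit sequence `U(k)`: `U₀ = 0`, `U₁ = 1`,
`U_{n+2} = (4k+2) U_{n+1} - U_n`. -/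
def shallitU (k : ℕ) : ℕ → ℤ
  | 0 => 0
  | 1 => 1
  | n + 2 => (4 * (k : ℤ) + 2) * shallitU k (n + 1) - shallitU k n

/-- `U₀(k), …, U_{n-1}(k)` are pairwise incongruent modulo `m`. -/
def Discriminates (k m n : ℕ) : Prop :=
  ∀ i j : ℕ, i < n → j < n → shallitU k i ≡ shallitU k j [ZMOD (m : ℤ)] → i = j

/-- The discriminator `D_k(n)`: the smallest positive integer `m` such that
`U₀(k), …, U_{n-1}(k)` are pairwise incongruent modulo `m`. -/
noncomputable def shallitD (k n : ℕ) : ℕ :=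
  sInf {m : ℕ | 0 < m ∧ Discriminates k m n}

/-- The index of appearance `z_k(m)`: the smallest `n ≥ 1` with `m ∣ U_n(k)`. -/
noncomputable def shallitZ (k m : ℕ) : ℕ :=
  sInf {n : ℕ | 0 < n ∧ (m : ℤ) ∣ shallitU k n}

/-- The incongruence index `ι_k(m)`: the largest `j` such that
`U₀(k), …, U_{j-1}(k)` are pairwise distinct modulo `m`. -/
noncomputable def shallitIota (k m : ℕ) : ℕ :=
  sSup {j : ℕ | Discriminates k m j}

/-- `P(N)`: positive integers all of whose prime divisors divide `N`. -/
def setP (N : ℕ) : Set ℕ :=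
  {m | 0 < m ∧ ∀ p : ℕ, p.Prime → p ∣ m → p ∣ N}

/-- The set `A_k`. -/
def setA (k : ℕ) : Set ℕ :=
  {m | 0 < m ∧ Odd m ∧ (∀ p : ℕ, p.Prime → p ∣ m → p ∣ k) ∧
    (k % 9 = 6 → ¬ (9 ∣ m))}

/-- The set `B_k`. -/
def setB (k : ℕ) : Set ℕ :=
  {m | 0 < m ∧ Even m ∧ (∀ p : ℕ, p.Prime → p ∣ m → p ∣ k * (k + 1)) ∧
    ((k % 9 = 2 ∨ k % 9 = 6) → ¬ (9 ∣ m))}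

/-- The set `S_{k,n} = {m ∈ A_k ∪ B_k : m ≥ n}`. -/
def setS (k n : ℕ) : Set ℕ :=
  {m | m ∈ setA k ∪ setB k ∧ n ≤ m}

/-- The set `A_{5,k} = {a·5^b : a ∈ A_k, b ≥ 1}`. -/
def setA5 (k : ℕ) : Set ℕ :=
  {m | ∃ a b : ℕ, a ∈ setA k ∧ 1 ≤ b ∧ m = a * 5 ^ b}

/-- The set `B_{5,k} = {a·5^b : a ∈ B_k, b ≥ 1}`. -/
def setB5 (k : ℕ) : Set ℕ :=
  {m | ∃ a b : ℕ, a ∈ setB k ∧ 1 ≤ b ∧ m = a * 5 ^ b}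

namespace ShallitAux

variable {k : ℕ}

lemma U0 : shallitU k 0 = 0 := rfl
lemma U1 : shallitU k 1 = 1 := rfl
lemma Urec (n : ℕ) : shallitU k (n+2) = (4 * (k:ℤ) + 2) * shallitU k (n+1) - shallitU k n := rfl

/-- addition identity -/
lemma addIdent (a b : ℕ) :
    shallitU k (a + b + 1) = shallitU k (a+1) * shallitU k (b+1) - shallitU k a * shallitU k b := by
  induction a using Nat.twoStepInduction with
  | zero => simp [U0, U1]
  | one =>
    have e : 1 + b + 1 = b + 2 := by omega
    rw [e, Urec b, Urec 0, U0, U1]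
    ring
  | more a ih1 ih2 =>
    have e1 : a + 2 + b + 1 = a + b + 1 + 2 := by omega
    have e2 : a + 1 + b + 1 = a + b + 1 + 1 := by omega
    have e3 : a + 2 + 1 = a + 1 + 2 := by omega
    rw [e2] at ih2
    rw [e1, Urec (a+b+1), ih1, ih2, e3, Urec (a+1), Urec a]
    ring

/-- Cassini-type identity -/
lemma cassini (n : ℕ) :
    shallitU k n * shallitU k (n+2) = shallitU k (n+1) * shallitU k (n+1) - 1 := by
  induction n with
  | zero => simp [U0, U1, Urec 0]
  | succ n ih =>
    have e : n + 1 + 2 = n + 2 + 1 := by omega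
    have e2 : n + 1 + 1 = n + 2 := by omega
    rw [e, e2]
    have hr := Urec (k := k) n
    have h2 : shallitU k (n+2+1) = (4*(k:ℤ)+2) * shallitU k (n+2) - shallitU k (n+1) := by
      have e4 : n + 2 + 1 = n + 1 + 2 := by omega
      rw [e4, Urec (n+1), e2]
    rw [h2]
    linear_combination ih - shallitU k (n+2) * hr


lemma dvd_shift (d : ℤ) (a z : ℕ) (hd : d ∣ shallitU k z) :
    d ∣ (shallitU k (a + 1 + z) - shallitU k (a+1) * shallitU k (z+1)) := by
  have h := addIdent (k := k) a z
  have e : a + 1 + z = a + z + 1 := by omega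
  rw [e, h]
  have e2 : shallitU k (a+1) * shallitU k (z+1) - shallitU k a * shallitU k z -
      shallitU k (a+1) * shallitU k (z+1) = -(shallitU k a * shallitU k z) := by ring
  rw [e2]
  exact dvd_neg.mpr (hd.mul_left _)

lemma dvd_mul_index (d : ℤ) (z : ℕ) (hd : d ∣ shallitU k z) :
    ∀ q, d ∣ shallitU k (q * z) := by
  intro q
  induction q with
  | zero => simpa [U0] using dvd_zero d
  | succ q ih =>
    rcases Nat.eq_zero_or_pos (q * z) with h0 | hpos
    · rcases Nat.mul_eq_zero.mp h0 with hq | hz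
      · simpa [hq] using hd
      · simpa [hz, U0] using dvd_zero d
    · obtain ⟨t, ht⟩ := Nat.exists_eq_add_of_lt hpos
      have e : (q+1) * z = t + 1 + z := by rw [Nat.succ_mul, ht]; omega
      rw [e]
      have h1 : d ∣ shallitU k (t+1) := by rw [show t + 1 = q * z from by rw [ht]; omega]; exact ih
      have h2 := dvd_shift d t z hd
      have : d ∣ shallitU k (t+1) * shallitU k (z+1) := h1.mul_right _
      simpa using dvd_add h2 this

lemma coprime_succ (d : ℤ) (z : ℕ) (hz : 0 < z) (hd : d ∣ shallitU k z) :
    IsCoprime d (shallitU k (z+1)) := by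
  obtain ⟨w, rfl⟩ := Nat.exists_eq_succ_of_ne_zero hz.ne'
  have h := cassini (k := k) w
  obtain ⟨c, hc⟩ := hd
  refine ⟨c * shallitU k (w + 1), -(shallitU k w), ?_⟩
  rw [show w + 1 + 1 = w + 2 from rfl]
  linear_combination (-1 : ℤ) * h - shallitU k (w+1) * hc


lemma dvd_sub_period (d : ℤ) (z : ℕ) (hz : 0 < z) (hd : d ∣ shallitU k z)
    (a : ℕ) (h : d ∣ shallitU k (a + z)) : d ∣ shallitU k a := by
  cases a with
  | zero => simp [U0]
  | succ a =>
    have h2 := dvd_shift (k := k) d a z hd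
    have h3 : d ∣ shallitU k (a+1) * shallitU k (z+1) := by
      have := dvd_sub h h2
      simpa using this
    exact (coprime_succ d z hz hd).dvd_of_dvd_mul_right h3

lemma dvd_sub_periods (d : ℤ) (z : ℕ) (hz : 0 < z) (hd : d ∣ shallitU k z)
    (a : ℕ) : ∀ q, d ∣ shallitU k (a + q * z) → d ∣ shallitU k a := by
  intro q
  induction q with
  | zero => simpa using id
  | succ q ih =>
    intro h
    have e : a + (q+1) * z = (a + q * z) + z := by rw [Nat.succ_mul]; omega
    rw [e] at h
    exact ih (dvd_sub_period d z hz hd _ h)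

lemma dvd_mod (d : ℤ) (z n : ℕ) (hz : 0 < z) (hd : d ∣ shallitU k z)
    (hn : d ∣ shallitU k n) : d ∣ shallitU k (n % z) := by
  have e : n % z + (n / z) * z = n := Nat.mod_add_div' n z
  exact dvd_sub_periods d z hz hd _ (n / z) (by rw [e]; exact hn)

lemma pair_eq_dvd (m : ℕ) [NeZero m] :
    ∀ i j : ℕ, i ≤ j →
      ((shallitU k i : ZMod m) = (shallitU k j : ZMod m) ∧
       (shallitU k (i+1) : ZMod m) = (shallitU k (j+1) : ZMod m)) →
      (m : ℤ) ∣ shallitU k (j - i) := by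
  intro i
  induction i with
  | zero =>
    intro j _ h
    have h1 : (shallitU k j : ZMod m) = 0 := by
      rw [← h.1]; simp [U0]
    rw [Nat.sub_zero]
    exact (ZMod.intCast_zmod_eq_zero_iff_dvd _ _).mp h1
  | succ i ih =>
    intro j hij h
    obtain ⟨j', rfl⟩ := Nat.exists_eq_succ_of_ne_zero (by omega : j ≠ 0)
    have hr1 : (shallitU k i : ZMod m) = (shallitU k j' : ZMod m) := by
      have e1 : shallitU k i = (4*(k:ℤ)+2) * shallitU k (i+1) - shallitU k (i+2) := by
        rw [Urec]; ring
      have e2 : shallitU k j' = (4*(k:ℤ)+2) * shallitU k (j'+1) - shallitU k (j'+2) := by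
        rw [Urec]; ring
      have c1 : (shallitU k (i+1) : ZMod m) = (shallitU k (j'+1) : ZMod m) := h.1
      have c2 : (shallitU k (i+1+1) : ZMod m) = (shallitU k (j'+1+1) : ZMod m) := h.2
      rw [show i+1+1 = i+2 from rfl, show j'+1+1 = j'+2 from rfl] at c2
      rw [e1, e2]
      push_cast
      rw [c1, c2]
    have := ih j' (by omega) ⟨hr1, h.1⟩
    simpa [Nat.succ_sub_succ] using this

lemma exists_apparition (m : ℕ) (hm : 0 < m) :
    ∃ n, 0 < n ∧ (m : ℤ) ∣ shallitU k n := by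
  haveI : NeZero m := ⟨hm.ne'⟩
  obtain ⟨i, j, hne, heq⟩ := Finite.exists_ne_map_eq_of_infinite
    (fun n : ℕ => ((shallitU k n : ZMod m), (shallitU k (n+1) : ZMod m)))
  rcases lt_or_gt_of_ne hne with hlt | hlt
  · refine ⟨j - i, by omega, pair_eq_dvd m i j (le_of_lt hlt) ?_⟩
    exact ⟨congrArg Prod.fst heq, congrArg Prod.snd heq⟩
  · refine ⟨i - j, by omega, pair_eq_dvd m j i (le_of_lt hlt) ?_⟩
    exact ⟨(congrArg Prod.fst heq).symm, (congrArg Prod.snd heq).symm⟩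


lemma z_mem (m : ℕ) (hm : 0 < m) :
    0 < shallitZ k m ∧ (m : ℤ) ∣ shallitU k (shallitZ k m) :=
  Nat.sInf_mem (exists_apparition m hm)

lemma z_dvd_iff {m : ℕ} (hm : 0 < m) (n : ℕ) :
    shallitZ k m ∣ n ↔ (m : ℤ) ∣ shallitU k n := by
  obtain ⟨hzpos, hzdvd⟩ := z_mem (k := k) m hm
  constructor
  · rintro ⟨q, rfl⟩
    rw [mul_comm]
    exact dvd_mul_index _ _ hzdvd q
  · intro hn
    have hr := dvd_mod (k := k) (m : ℤ) (shallitZ k m) n hzpos hzdvd hn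
    by_contra hcon
    have hne : n % shallitZ k m ≠ 0 := fun h => hcon (Nat.dvd_of_mod_eq_zero h)
    have hmem : n % shallitZ k m ∈ {n : ℕ | 0 < n ∧ (m : ℤ) ∣ shallitU k n} :=
      ⟨Nat.pos_of_ne_zero hne, hr⟩
    have hle : shallitZ k m ≤ n % shallitZ k m := Nat.sInf_le hmem
    have hlt := Nat.mod_lt n hzpos
    omega

lemma z_pos (m : ℕ) (hm : 0 < m) : 0 < shallitZ k m := (z_mem m hm).1

lemma z_one : shallitZ k 1 = 1 := by
  have h1 : (1 : ℕ) ∈ {n : ℕ | 0 < n ∧ ((1:ℕ) : ℤ) ∣ shallitU k n} := ⟨one_pos, one_dvd _⟩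
  have h2 : shallitZ k 1 ≤ 1 := Nat.sInf_le h1
  have h3 := z_pos (k := k) 1 one_pos
  omega

lemma z_dvd_z {m₁ m₂ : ℕ} (h : m₁ ∣ m₂) (hm₁ : 0 < m₁) (hm₂ : 0 < m₂) :
    shallitZ k m₁ ∣ shallitZ k m₂ := by
  rw [z_dvd_iff hm₁]
  exact dvd_trans (Int.natCast_dvd_natCast.mpr h) (z_mem m₂ hm₂).2

lemma z_mul {m₁ m₂ : ℕ} (h : Nat.Coprime m₁ m₂) (hm₁ : 0 < m₁) (hm₂ : 0 < m₂) :
    shallitZ k (m₁ * m₂) = Nat.lcm (shallitZ k m₁) (shallitZ k m₂) := by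
  have hm : 0 < m₁ * m₂ := Nat.mul_pos hm₁ hm₂
  have hco : IsCoprime (m₁ : ℤ) (m₂ : ℤ) := Nat.isCoprime_iff_coprime.mpr h
  apply Nat.dvd_antisymm
  · rw [z_dvd_iff hm]
    push_cast
    exact hco.mul_dvd
      ((z_dvd_iff hm₁ _).mp (Nat.dvd_lcm_left _ _))
      ((z_dvd_iff hm₂ _).mp (Nat.dvd_lcm_right _ _))
  · exact Nat.lcm_dvd (z_dvd_z ⟨m₂, rfl⟩ hm₁ hm) (z_dvd_z ⟨m₁, mul_comm _ _⟩ hm₂ hm)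

lemma z_dvd_self_of_dvd {m : ℕ} (hm : 0 < m) (h : (m : ℤ) ∣ shallitU k m) :
    shallitZ k m ∣ m := (z_dvd_iff hm m).mpr h


/-- Joint lifting congruences. -/
lemma lift_pair (d : ℤ) (n' : ℕ) (hd : d ∣ shallitU k (n'+1)) : ∀ q : ℕ,
    shallitU k (q * (n'+1)) ≡
      q * shallitU k (n'+1) * shallitU k (n'+2) ^ (q-1) [ZMOD d^2] ∧
    shallitU k (q * (n'+1) + 1) ≡ shallitU k (n'+2) ^ q [ZMOD d] := by
  intro q
  induction q with
  | zero => simp [U0, U1, Int.ModEq.refl]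
  | succ q ih =>
    rcases Nat.eq_zero_or_pos q with rfl | hq
    · constructor
      · have e : (0+1) * (n'+1) = n'+1 := by omega
        rw [e]
        have e2 : ((0+1 : ℕ) : ℤ) * shallitU k (n'+1) * shallitU k (n'+2) ^ (0+1-1)
            = shallitU k (n'+1) := by norm_num
        rw [e2]
      · have e : (0+1) * (n'+1) + 1 = n'+2 := by omega
        rw [e, pow_one]
    · obtain ⟨A, B⟩ := ih
      obtain ⟨u, hu⟩ := id hd
      have hUrec : shallitU k (n'+2) = (4*(k:ℤ)+2) * shallitU k (n'+1) - shallitU k n' := Urec n'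
      have e1 : (q+1) * (n'+1) = q * (n'+1) + n' + 1 := by rw [Nat.succ_mul]; omega
      have hadd1 := addIdent (k := k) (q * (n'+1)) n'
      have h1 : shallitU k (q*(n'+1)+1) * shallitU k (n'+1)
          ≡ shallitU k (n'+2) ^ q * shallitU k (n'+1) [ZMOD d^2] := by
        rw [Int.modEq_iff_dvd] at B ⊢
        have e : shallitU k (n'+2) ^ q * shallitU k (n'+1) - shallitU k (q*(n'+1)+1) * shallitU k (n'+1)
            = (shallitU k (n'+2) ^ q - shallitU k (q*(n'+1)+1)) * shallitU k (n'+1) := by ring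
        rw [e, sq]
        exact mul_dvd_mul B hd
      have h2 : shallitU k (q*(n'+1)) * shallitU k n'
          ≡ ((q:ℤ) * shallitU k (n'+1) * shallitU k (n'+2) ^ (q-1)) * shallitU k n' [ZMOD d^2] :=
        A.mul_right _
      have h3 : ((q:ℤ) * shallitU k (n'+1) * shallitU k (n'+2) ^ (q-1)) * shallitU k n'
          ≡ -((q:ℤ) * shallitU k (n'+1) * shallitU k (n'+2) ^ (q-1) * shallitU k (n'+2)) [ZMOD d^2] := by
        rw [Int.modEq_iff_dvd]
        refine ⟨-((q:ℤ) * shallitU k (n'+2) ^ (q-1) * (4*(k:ℤ)+2) * u * u), ?_⟩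
        have hx : shallitU k (n'+2) + shallitU k n' = (4*(k:ℤ)+2) * shallitU k (n'+1) := by
          rw [hUrec]; ring
        calc -((q:ℤ) * shallitU k (n'+1) * shallitU k (n'+2) ^ (q-1) * shallitU k (n'+2))
              - (q:ℤ) * shallitU k (n'+1) * shallitU k (n'+2) ^ (q-1) * shallitU k n'
            = -((q:ℤ) * shallitU k (n'+2) ^ (q-1)) * shallitU k (n'+1)
                * (shallitU k (n'+2) + shallitU k n') := by ring
          _ = -((q:ℤ) * shallitU k (n'+2) ^ (q-1)) * shallitU k (n'+1)
                * ((4*(k:ℤ)+2) * shallitU k (n'+1)) := by rw [hx]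
          _ = d^2 * -((q:ℤ) * shallitU k (n'+2) ^ (q-1) * (4*(k:ℤ)+2) * u * u) := by
                rw [hu]; ring
      have hcomb : shallitU k ((q+1) * (n'+1))
          ≡ shallitU k (n'+2) ^ q * shallitU k (n'+1)
            - -((q:ℤ) * shallitU k (n'+1) * shallitU k (n'+2) ^ (q-1) * shallitU k (n'+2))
            [ZMOD d^2] := by
        rw [e1, hadd1]
        exact h1.sub (h2.trans h3)
      have hpow : shallitU k (n'+2) ^ (q-1) * shallitU k (n'+2) = shallitU k (n'+2) ^ q := by
        rw [← pow_succ]; congr 1; omega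
      have hfin : shallitU k (n'+2) ^ q * shallitU k (n'+1)
            - -((q:ℤ) * shallitU k (n'+1) * shallitU k (n'+2) ^ (q-1) * shallitU k (n'+2))
          = ((q:ℤ)+1) * shallitU k (n'+1) * shallitU k (n'+2) ^ q := by
        rw [← hpow]; ring
      constructor
      · rw [hfin] at hcomb
        have e : ((q+1 : ℕ) : ℤ) * shallitU k (n'+1) * shallitU k (n'+2) ^ (q+1-1)
            = ((q:ℤ)+1) * shallitU k (n'+1) * shallitU k (n'+2) ^ q := by
          push_cast [Nat.add_sub_cancel]; ring
        rw [e]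
        exact hcomb
      · have e2 : (q+1) * (n'+1) + 1 = q * (n'+1) + (n'+1) + 1 := by rw [Nat.succ_mul]
        have hadd2 := addIdent (k := k) (q * (n'+1)) (n'+1)
        rw [e2, hadd2]
        have hB : shallitU k (q*(n'+1)+1) * shallitU k (n'+1+1)
            ≡ shallitU k (n'+2) ^ q * shallitU k (n'+2) [ZMOD d] := B.mul_right _
        have hA0 : (d : ℤ) ∣ shallitU k (q*(n'+1)) := by
          have hA' : shallitU k (q*(n'+1))
              ≡ (q:ℤ) * shallitU k (n'+1) * shallitU k (n'+2) ^ (q-1) [ZMOD d] :=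
            A.of_dvd (by rw [sq]; exact dvd_mul_right d d)
          have h5 : (d:ℤ) ∣ (q : ℤ) * shallitU k (n'+1) * shallitU k (n'+2) ^ (q-1) :=
            Dvd.dvd.mul_right (Dvd.dvd.mul_left hd _) _
          have h6 := hA'.dvd
          simpa using dvd_sub h5 h6
        have hz0 : shallitU k (q*(n'+1)) * shallitU k (n'+1) ≡ 0 [ZMOD d] := by
          rw [Int.modEq_zero_iff_dvd]
          exact hA0.mul_right _
        have := hB.sub hz0
        have e3 : shallitU k (n'+2) ^ q * shallitU k (n'+2) - 0 = shallitU k (n'+2) ^ (q+1) := by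
          rw [pow_succ]; ring
        rw [e3] at this
        exact this


/-- Lifting: if `p^e ∣ U n` with `e ≥ 1` then `p^(e+1) ∣ U (p*n)`. -/
lemma lift_step {p : ℕ} (hp : 2 ≤ p) {e n : ℕ} (he : 1 ≤ e)
    (h : ((p:ℤ))^e ∣ shallitU k n) : ((p:ℤ))^(e+1) ∣ shallitU k (p * n) := by
  rcases Nat.eq_zero_or_pos n with rfl | hn
  · simpa [U0] using dvd_zero _
  obtain ⟨n', rfl⟩ := Nat.exists_eq_succ_of_ne_zero hn.ne'
  have H := (lift_pair (k := k) ((p:ℤ)^e) n' h p).1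
  have h6 := H.dvd
  have hd1 : ((p:ℤ))^(e+1) ∣ (p:ℤ) * shallitU k (n'+1) * shallitU k (n'+2) ^ (p-1) := by
    have : ((p:ℤ))^(e+1) ∣ (p:ℤ) * (p:ℤ)^e := by rw [pow_succ]; exact ⟨1, by ring⟩
    exact Dvd.dvd.mul_right (this.trans (by exact mul_dvd_mul_left _ h)) _
  have hd2 : ((p:ℤ))^(e+1) ∣ ((p:ℤ)^e)^2 := by
    rw [← pow_mul]
    exact pow_dvd_pow _ (by omega)
  have h7 : ((p:ℤ))^(e+1) ∣ (p:ℤ) * shallitU k (n'+1) * shallitU k (n'+2) ^ (p-1)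
      - shallitU k (p * (n'+1)) := hd2.trans h6
  have := dvd_sub hd1 h7
  simpa using this

lemma lift_pows {p : ℕ} (hp : 2 ≤ p) {e n : ℕ} (he : 1 ≤ e)
    (h : ((p:ℤ))^e ∣ shallitU k n) :
    ∀ i : ℕ, ((p:ℤ))^(e+i) ∣ shallitU k (p^i * n) := by
  intro i
  induction i with
  | zero => simpa using h
  | succ i ih =>
    have := lift_step (k := k) hp (e := e + i) (by omega) ih
    have e2 : p * (p^i * n) = p^(i+1) * n := by ring
    rw [e2] at this
    have e3 : e + i + 1 = e + (i+1) := by omega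
    rw [e3] at this
    exact this

/-- Structure mod p for p ∣ k(k+1): `U (n+1) ≡ (n+1) r^n` with `r = 2k+1`. -/
lemma Uform_root {p : ℕ} (hp : p.Prime) (hpc : p ∣ k * (k+1)) :
    ∀ n : ℕ, ((shallitU k (n+1) : ZMod p)) = ((n:ZMod p)+1) * ((2*(k:ZMod p)+1)) ^ n := by
  haveI := Fact.mk hp
  have hr2 : ((2*(k:ZMod p)+1)) ^ 2 = 1 := by
    have hc : ((k * (k+1) : ℕ) : ZMod p) = 0 := (ZMod.natCast_eq_zero_iff _ _).mpr hpc
    push_cast at hc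
    ring_nf
    ring_nf at hc
    linear_combination 4 * hc
  intro n
  induction n using Nat.twoStepInduction with
  | zero => simp [U1]
  | one =>
    rw [Urec 0, U0, U1]
    push_cast
    ring
  | more n ih1 ih2 =>
    rw [show n+2+1 = (n+1)+2 from rfl, Urec (n+1)]
    push_cast
    rw [ih1, ih2]
    push_cast
    linear_combination ((n:ZMod p) + 1) * ((2*(k:ZMod p)+1)) ^ n * hr2

lemma dvd_iff_index {p : ℕ} (hp : p.Prime) (hpc : p ∣ k * (k+1)) (n : ℕ) :
    (p:ℤ) ∣ shallitU k n ↔ p ∣ n := by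
  haveI := Fact.mk hp
  cases n with
  | zero => simp [U0]
  | succ n =>
    have hf := Uform_root (k := k) hp hpc n
    have hr2 : ((2*(k:ZMod p)+1)) ^ 2 = 1 := by
      have hc : ((k * (k+1) : ℕ) : ZMod p) = 0 := (ZMod.natCast_eq_zero_iff _ _).mpr hpc
      push_cast at hc
      linear_combination 4 * hc
    have hrne : ((2*(k:ZMod p)+1)) ≠ 0 := by
      intro h0
      rw [h0] at hr2
      simp at hr2
    rw [← ZMod.intCast_zmod_eq_zero_iff_dvd, hf]
    have hunit : IsUnit (((2*(k:ZMod p)+1)) ^ n) := (Ne.isUnit hrne).pow n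
    rw [← Nat.cast_ofNat (n := 2)] at *
    constructor
    · intro h
      have : ((n:ZMod p)+1) = 0 := by
        rcases mul_eq_zero.mp h with h' | h'
        · exact h'
        · exact absurd h' (hunit.ne_zero)
      have : ((n+1 : ℕ) : ZMod p) = 0 := by push_cast; linear_combination this
      exact (ZMod.natCast_eq_zero_iff _ _).mp this
    · intro h
      have : ((n+1 : ℕ) : ZMod p) = 0 := (ZMod.natCast_eq_zero_iff _ _).mpr h
      push_cast at this
      rw [show ((n:ZMod p)+1) = 0 from by linear_combination this]
      ring


lemma z_p_eq_of_dvd {p : ℕ} (hp : p.Prime) (hpc : p ∣ k * (k+1)) : shallitZ k p = p := by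
  have hppos : 0 < p := hp.pos
  have hdvd : (p:ℤ) ∣ shallitU k p := (dvd_iff_index hp hpc p).mpr dvd_rfl
  have h1 : shallitZ k p ∣ p := (z_dvd_iff hppos p).mpr hdvd
  rcases (Nat.dvd_prime hp).mp h1 with h | h
  · exfalso
    have := (z_mem (k := k) p hppos).2
    rw [h, U1] at this
    have h2 := Int.eq_one_of_dvd_one (by positivity) this
    have : p = 1 := by exact_mod_cast h2
    exact hp.ne_one this
  · exact h

lemma ppow_dvd_U_ppow {p : ℕ} (hp : p.Prime) (hpc : p ∣ k * (k+1)) (e : ℕ) :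
    ((p:ℤ))^e ∣ shallitU k (p^e) := by
  cases e with
  | zero => simp
  | succ e =>
    have h1 : ((p:ℤ))^1 ∣ shallitU k (p^1) := by
      simpa using (dvd_iff_index hp hpc p).mpr dvd_rfl
    have := lift_pows (k := k) hp.two_le (le_refl 1) h1 e
    have e2 : p^e * p^1 = p^(e+1) := by ring
    rw [e2] at this
    have e3 : 1 + e = e + 1 := by omega
    rw [e3] at this
    exact this

lemma smooth_dvd_U_self : ∀ a : ℕ, 0 < a → (∀ q : ℕ, q.Prime → q ∣ a → q ∣ k * (k+1)) →
    (a:ℤ) ∣ shallitU k a := by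
  intro a
  induction a using Nat.strong_induction_on with
  | _ a ih =>
    intro ha hq
    rcases eq_or_lt_of_le (Nat.one_le_iff_ne_zero.mpr ha.ne') with h1 | h1
    · rw [← h1]; exact one_dvd _
    have hp : a.minFac.Prime := Nat.minFac_prime (by omega)
    set p := a.minFac with hpdef
    set e := a.factorization p with hedef
    set a' := a / p ^ e with ha'def
    have hfact : p ^ e * a' = a := Nat.ordProj_mul_ordCompl_eq_self a p
    have hpc : p ∣ k * (k+1) := hq p hp (Nat.minFac_dvd a)
    have hpa : p ∣ a := Nat.minFac_dvd a
    have hppos : 0 < p := hp.pos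
    have hepos : 0 < e := by
      rw [hedef]
      exact Nat.Prime.factorization_pos_of_dvd hp ha.ne' hpa
    have ha' : 0 < a' := Nat.ordCompl_pos p ha.ne'
    have ha'lt : a' < a := by
      apply Nat.div_lt_self ha
      exact Nat.one_lt_pow hepos.ne' hp.one_lt
    have hq' : ∀ q : ℕ, q.Prime → q ∣ a' → q ∣ k * (k+1) := by
      intro q hq1 hq2
      exact hq q hq1 (hq2.trans (Nat.ordCompl_dvd a p))
    have ih' := ih a' ha'lt ha' hq'
    -- p^e ∣ U a
    have h1 : ((p^e : ℕ) : ℤ) ∣ shallitU k a := by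
      have hd : ((p:ℤ))^e ∣ shallitU k (p^e) := ppow_dvd_U_ppow hp hpc e
      obtain ⟨q', hq'eq⟩ : p ^ e ∣ a := Nat.ordProj_dvd a p
      rw [hq'eq, mul_comm]
      push_cast
      exact dvd_mul_index _ _ hd q'
    have h2 : (a' : ℤ) ∣ shallitU k a := by
      obtain ⟨q', hq'eq⟩ : a' ∣ a := Nat.ordCompl_dvd a p
      rw [hq'eq, mul_comm]
      exact dvd_mul_index _ _ ih' q'
    have hco : Nat.Coprime (p^e) a' := Nat.Coprime.pow_left _ (Nat.coprime_ordCompl hp ha.ne')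
    have hcoZ : IsCoprime ((p^e : ℕ) : ℤ) ((a' : ℕ) : ℤ) := Nat.isCoprime_iff_coprime.mpr hco
    have := hcoZ.mul_dvd h1 h2
    rw [← Nat.cast_mul, hfact] at this
    exact this

lemma z_dvd_self_smooth {a : ℕ} (ha : 0 < a)
    (hq : ∀ q : ℕ, q.Prime → q ∣ a → q ∣ k * (k+1)) : shallitZ k a ∣ a :=
  (z_dvd_iff ha a).mpr (smooth_dvd_U_self a ha hq)

/-- For any prime `p` and `b ≥ 1`, `z(p^b) ∣ p^(b-1) * z(p)`. -/
lemma z_ppow_dvd {p : ℕ} (hp : p.Prime) (b : ℕ) :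
    shallitZ k (p^b) ∣ p^(b-1) * shallitZ k p := by
  rcases Nat.eq_zero_or_pos b with rfl | hb
  · simp [z_one]
  have hppos : 0 < p := hp.pos
  have hz1 : ((p:ℤ))^1 ∣ shallitU k (shallitZ k p) := by
    simpa using (z_mem (k := k) p hppos).2
  have := lift_pows (k := k) hp.two_le (le_refl 1) hz1 (b-1)
  have e3 : 1 + (b-1) = b := by omega
  rw [e3] at this
  rw [z_dvd_iff (pow_pos hppos b)]
  push_cast
  exact this

lemma z_p_dvd_z_ppow {p : ℕ} (hp : p.Prime) {b : ℕ} (hb : 0 < b) :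
    shallitZ k p ∣ shallitZ k (p^b) :=
  z_dvd_z (dvd_pow_self p hb.ne') hp.pos (pow_pos hp.pos b)


/-- Key lemma: `p ∣ U((p - ε)/2)` where `ε` is the Legendre symbol of `k(k+1)`. -/
lemma legendre_apparition {p : ℕ} (hp : p.Prime) (hp2 : p ≠ 2) (hpc : ¬ p ∣ k * (k+1)) :
    letI : Fact p.Prime := Fact.mk hp
    (legendreSym p (k*(k+1) : ℕ) = 1 → (p:ℤ) ∣ shallitU k ((p-1)/2)) ∧
    (legendreSym p (k*(k+1) : ℕ) = -1 → (p:ℤ) ∣ shallitU k ((p+1)/2)) := by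
  letI : Fact p.Prime := Fact.mk hp
  set F := GaloisField p 2 with hF
  haveI : Fintype F := Fintype.ofFinite _
  have hcard : Fintype.card F = p^2 := by
    rw [← Nat.card_eq_fintype_card]
    exact GaloisField.card p 2 (by norm_num)
  have hrc : ringChar F ≠ 2 := by
    rw [ringChar.eq F p]; exact hp2
  have hinj : Function.Injective (algebraMap (ZMod p) F) := (algebraMap (ZMod p) F).injective
  set y : F := (k : F) with hy
  have hcast : ((k*(k+1) : ℕ) : F) = y * (y + 1) := by rw [Nat.cast_mul, Nat.cast_add, Nat.cast_one, ← hy]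
  have hc0 : ((k*(k+1) : ℕ) : F) ≠ 0 := by
    have h1 : ((k*(k+1) : ℕ) : ZMod p) ≠ 0 := by
      rw [Ne, ZMod.natCast_eq_zero_iff]; exact hpc
    rw [← map_natCast (algebraMap (ZMod p) F)]
    intro h
    exact h1 (hinj (by simpa using h))
  have hleg0 : legendreSym p (k*(k+1) : ℕ) ≠ 0 := by
    rw [Ne, legendreSym.eq_zero_iff]
    intro h
    have : ((k*(k+1) : ℕ) : ZMod p) = 0 := by exact_mod_cast h
    rw [ZMod.natCast_eq_zero_iff] at this
    exact hpc this
  -- the (p/2)-th power of c in F is the (image of the) Legendre symbol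
  have hpow : ((k*(k+1) : ℕ) : F) ^ (p/2) = ((legendreSym p (k*(k+1) : ℕ) : ℤ) : F) := by
    have h1 : ((legendreSym p (k*(k+1):ℕ) : ℤ) : ZMod p) = ((k*(k+1):ℕ) : ZMod p) ^ (p/2) := by
      have := legendreSym.eq_pow p ((k*(k+1):ℕ) : ℤ)
      push_cast at this ⊢
      exact this
    calc ((k*(k+1) : ℕ) : F) ^ (p/2)
        = algebraMap (ZMod p) F (((k*(k+1):ℕ) : ZMod p) ^ (p/2)) := by
          rw [map_pow, map_natCast]
      _ = algebraMap (ZMod p) F ((legendreSym p (k*(k+1):ℕ) : ℤ) : ZMod p) := by rw [h1]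
      _ = ((legendreSym p (k*(k+1) : ℕ) : ℤ) : F) := by rw [map_intCast]
  have hoddp : p % 2 = 1 := Nat.Prime.eq_two_or_odd hp |>.resolve_left hp2
  have hsq : IsSquare ((k*(k+1):ℕ) : F) := by
    rw [FiniteField.isSquare_iff hrc hc0, hcard]
    have he : p^2/2 = (p/2) * (p+1) := by
      obtain ⟨t, ht⟩ : ∃ t, p = 2*t+1 := ⟨p/2, by omega⟩
      subst ht
      have h2 : (2*t+1)^2 = 2*(2*t^2+2*t)+1 := by ring
      rw [h2]
      have h4 : (2*(2*t^2+2*t)+1)/2 = 2*t^2+2*t := by omega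
      rw [h4]
      have h3 : (2*t+1)/2 = t := by omega
      rw [h3]
      ring
    rw [he, pow_mul, hpow]
    rcases legendreSym.eq_one_or_neg_one p (a := ((k*(k+1):ℕ):ℤ))
        (by
          rw [Ne, ZMod.intCast_zmod_eq_zero_iff_dvd]
          push_cast
          exact_mod_cast fun h => hpc (Int.ofNat_dvd.mp (by exact_mod_cast h))) with h | h
    · rw [h]; norm_num
    · rw [h]
      push_cast
      exact Even.neg_one_pow (by rw [Nat.even_iff]; omega)
  obtain ⟨x, hx⟩ := hsq
  have hxx : x * x = y * (y + 1) := by rw [← hx, hcast]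
  have hxne : x ≠ 0 := by
    intro h0
    rw [h0] at hx
    apply hc0
    rw [hx, mul_zero]
  set A : F := 2*y + 1 + 2*x with hA
  set B : F := 2*y + 1 - 2*x with hB
  have hAB : A * B = 1 := by rw [hA, hB]; linear_combination (-4 : F) * hxx
  have hA2 : A^2 = (4*y+2)*A - 1 := by rw [hA]; linear_combination 4 * hxx
  have hB2 : B^2 = (4*y+2)*B - 1 := by rw [hB]; linear_combination 4 * hxx
  have hAne : A ≠ 0 := left_ne_zero_of_mul_eq_one hAB
  have h4ne : (4 : F) ≠ 0 := by
    have : ((4:ℕ) : ZMod p) ≠ 0 := by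
      rw [Ne, ZMod.natCast_eq_zero_iff]
      intro hd
      have hd2 : p ∣ 2^2 := by simpa using hd
      exact hp2 ((Nat.prime_dvd_prime_iff_eq hp Nat.prime_two).mp (hp.dvd_of_dvd_pow hd2))
    intro h0
    apply this
    apply hinj
    rw [map_natCast, map_zero]
    exact_mod_cast h0
  have hABsub : A - B = 4 * x := by rw [hA, hB]; ring
  have hsubne : A - B ≠ 0 := by rw [hABsub]; exact mul_ne_zero h4ne hxne
  have hBinet : ∀ n : ℕ, ((shallitU k n : ℤ) : F) * (A - B) = A^n - B^n := by
    intro n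
    induction n using Nat.twoStepInduction with
    | zero => simp [U0]
    | one => simp [U1]
    | more n ih1 ih2 =>
      rw [Urec n]
      rw [Int.cast_sub, Int.cast_mul, Int.cast_add, Int.cast_mul, Int.cast_natCast, Int.cast_ofNat, Int.cast_ofNat]
      rw [← hy]
      linear_combination (4*y+2) * ih2 - ih1 - A^n * hA2 + B^n * hB2
  have key : ∀ n : ℕ, A^n = B^n → (p:ℤ) ∣ shallitU k n := by
    intro n hn
    have h0 : ((shallitU k n : ℤ) : F) = 0 := by
      have := hBinet n
      rw [hn, sub_self] at this
      exact (mul_eq_zero.mp this).resolve_right hsubne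
    have h1 : ((shallitU k n : ℤ) : ZMod p) = 0 := by
      apply hinj
      rw [map_intCast, map_zero]
      exact h0
    exact (ZMod.intCast_zmod_eq_zero_iff_dvd _ _).mp h1
  have hxp : x ^ p = ((legendreSym p (k*(k+1):ℕ) : ℤ) : F) * x := by
    have h1 : x ^ p = (x*x)^(p/2) * x := by
      rw [← sq, ← pow_mul, ← pow_succ]
      congr 1
      omega
    have hxx2 : x * x = ((k*(k+1):ℕ) : F) := hx.symm
    rw [h1, hxx2, hpow]
  have hnatp : ∀ m : ℕ, ((m:ℕ):F)^p = ((m:ℕ):F) := by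
    intro m
    rw [← map_natCast (algebraMap (ZMod p) F), ← map_pow, ZMod.pow_card]
  have hyp : (2*y+1 : F)^p = 2*y+1 := by
    have : (2*y+1 : F) = ((2*k+1 : ℕ) : F) := by rw [hy, Nat.cast_add, Nat.cast_mul, Nat.cast_one, Nat.cast_ofNat]
    rw [this, hnatp]
  have h2p : (2 : F)^p = 2 := by
    have : (2 : F) = ((2:ℕ) : F) := by norm_num
    rw [this, hnatp]
  have hApow : A ^ p = 2*y+1 + ((legendreSym p (k*(k+1):ℕ) : ℤ) : F) * (2*x) := by
    rw [hA, add_pow_char, hyp, mul_pow, h2p, hxp]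
    ring
  constructor
  · -- Legendre symbol 1
    intro hleg
    have hApA : A ^ p = A := by
      rw [hApow, hleg, hA]
      push_cast
      ring
    have hApm1 : A ^ (p-1) = 1 := by
      have h5 : A^(p-1) * A = 1 * A := by
        rw [← pow_succ, one_mul, show p - 1 + 1 = p by omega, hApA]
      exact mul_right_cancel₀ hAne h5
    apply key
    have h2n : (p-1)/2 + (p-1)/2 = p - 1 := by omega
    have h6 : A^((p-1)/2) * A^((p-1)/2) = A^((p-1)/2) * B^((p-1)/2) := by
      rw [← pow_add, h2n, hApm1, ← mul_pow, hAB, one_pow]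
    exact (mul_left_cancel₀ (pow_ne_zero _ hAne) h6)
  · -- Legendre symbol -1
    intro hleg
    have hApB : A ^ p = B := by
      rw [hApow, hleg, hB]
      push_cast
      ring
    have hApp1 : A ^ (p+1) = 1 := by
      rw [pow_succ, hApB, mul_comm]
      exact hAB
    apply key
    have h2n : (p+1)/2 + (p+1)/2 = p + 1 := by omega
    have h6 : A^((p+1)/2) * A^((p+1)/2) = A^((p+1)/2) * B^((p+1)/2) := by
      rw [← pow_add, h2n, hApp1, ← mul_pow, hAB, one_pow]
    exact (mul_left_cancel₀ (pow_ne_zero _ hAne) h6)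


/-- Split `m` into a `c`-smooth part and a part coprime to `c`. -/
lemma split_smooth (c : ℕ) : ∀ m : ℕ, 0 < m → ∃ a t : ℕ, m = a * t ∧ 0 < a ∧ 0 < t ∧
    (∀ q : ℕ, q.Prime → q ∣ a → q ∣ c) ∧ (∀ q : ℕ, q.Prime → q ∣ t → ¬ q ∣ c) ∧
    Nat.Coprime a t := by
  intro m
  induction m using Nat.strong_induction_on with
  | _ m ih =>
    intro hm
    rcases eq_or_lt_of_le (Nat.one_le_iff_ne_zero.mpr hm.ne') with h1 | h1
    · exact ⟨1, 1, by omega, one_pos, one_pos,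
        fun q hq hd => absurd (Nat.dvd_one.mp hd) hq.ne_one,
        fun q hq hd => absurd (Nat.dvd_one.mp hd) hq.ne_one, Nat.coprime_one_left 1⟩
    have hp : m.minFac.Prime := Nat.minFac_prime (by omega)
    set p := m.minFac with hpdef
    set e := m.factorization p with hedef
    set m' := m / p ^ e with hm'def
    have hfact : p ^ e * m' = m := Nat.ordProj_mul_ordCompl_eq_self m p
    have hpm : p ∣ m := Nat.minFac_dvd m
    have hepos : 0 < e := Nat.Prime.factorization_pos_of_dvd hp hm.ne' hpm
    have hm' : 0 < m' := Nat.ordCompl_pos p hm.ne'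
    have hm'lt : m' < m := Nat.div_lt_self hm (Nat.one_lt_pow hepos.ne' hp.one_lt)
    have hpnm' : ¬ p ∣ m' := Nat.not_dvd_ordCompl hp hm.ne'
    obtain ⟨a', t', heq, ha', ht', hqa', hqt', hco'⟩ := ih m' hm'lt hm'
    have hpea : ∀ q : ℕ, q.Prime → q ∣ p^e → q = p := by
      intro q hq hqd
      exact (Nat.prime_dvd_prime_iff_eq hq hp).mp (hq.dvd_of_dvd_pow hqd)
    have hcop_pe : ∀ s : ℕ, s ∣ m' → Nat.Coprime (p^e) s := by
      intro s hs
      apply Nat.Coprime.pow_left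
      rw [Nat.Prime.coprime_iff_not_dvd hp]
      exact fun hd => hpnm' (hd.trans hs)
    by_cases hpc : p ∣ c
    · refine ⟨p^e * a', t', by rw [mul_assoc, ← heq, hfact], Nat.mul_pos (pow_pos hp.pos e) ha', ht', ?_, hqt', ?_⟩
      · intro q hq hqd
        rcases (Nat.Prime.dvd_mul hq).mp hqd with h | h
        · rw [hpea q hq h]; exact hpc
        · exact hqa' q hq h
      · exact Nat.Coprime.mul (hcop_pe t' ⟨a', by rw [heq]; ring⟩) hco'
    · refine ⟨a', p^e * t', by rw [← hfact, heq]; ring, ha', Nat.mul_pos (pow_pos hp.pos e) ht', hqa', ?_, ?_⟩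
      · intro q hq hqd
        rcases (Nat.Prime.dvd_mul hq).mp hqd with h | h
        · rw [hpea q hq h]; exact hpc
        · exact hqt' q hq h
      · exact Nat.Coprime.mul_right ((hcop_pe a' ⟨t', heq⟩).symm) hco'

/-- `p` odd whenever `p` is a prime not dividing `k(k+1)`. -/
lemma odd_of_not_dvd {p : ℕ} (hp : p.Prime) (hpc : ¬ p ∣ k * (k+1)) : p ≠ 2 := by
  intro h2
  exact hpc (h2 ▸ (Nat.even_mul_succ_self k).two_dvd)

/-- z(p) divides (p+1)/2 or (p-1)/2 hence `2 z(p) ≤ p+1`. -/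
lemma z_p_le {p : ℕ} (hp : p.Prime) (hpc : ¬ p ∣ k * (k+1)) :
    2 * shallitZ k p ≤ p + 1 := by
  have hp2 := odd_of_not_dvd (k := k) hp hpc
  have hodd : p % 2 = 1 := Nat.Prime.eq_two_or_odd hp |>.resolve_left hp2
  have hp3 : 3 ≤ p := by
    have := hp.two_le
    omega
  have H := legendre_apparition (k := k) hp hp2 hpc
  haveI := Fact.mk hp
  have hne : (((k*(k+1):ℕ) : ℤ) : ZMod p) ≠ 0 := by
    rw [Ne, ZMod.intCast_zmod_eq_zero_iff_dvd]
    intro h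
    exact hpc (Int.ofNat_dvd.mp (by exact_mod_cast h))
  rcases legendreSym.eq_one_or_neg_one p hne with h | h
  · have := (z_dvd_iff (k := k) hp.pos ((p-1)/2)).mpr (H.1 h)
    have hle : shallitZ k p ≤ (p-1)/2 := Nat.le_of_dvd (by omega) this
    omega
  · have := (z_dvd_iff (k := k) hp.pos ((p+1)/2)).mpr (H.2 h)
    have hle : shallitZ k p ≤ (p+1)/2 := Nat.le_of_dvd (by omega) this
    omega

lemma z_ppow_le {p : ℕ} (hp : p.Prime) (hpc : ¬ p ∣ k * (k+1)) (b : ℕ) (hb : 0 < b) :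
    3 * shallitZ k (p^b) ≤ 2 * p^b := by
  have hp2 := odd_of_not_dvd (k := k) hp hpc
  have hp3 : 3 ≤ p := by have := hp.two_le; have := Nat.Prime.eq_two_or_odd hp; omega
  have h1 : shallitZ k (p^b) ≤ p^(b-1) * shallitZ k p := by
    apply Nat.le_of_dvd
    · exact Nat.mul_pos (pow_pos hp.pos _) (z_pos _ hp.pos)
    · exact z_ppow_dvd hp b
  have h2 := z_p_le (k := k) hp hpc
  have h3 : p^b = p^(b-1) * p := by
    rw [← pow_succ]
    congr 1
    omega
  have h4 : 3 * (2 * shallitZ k p) ≤ 2 * (2 * p) := by omega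
  calc 3 * shallitZ k (p^b) ≤ 3 * (p^(b-1) * shallitZ k p) := by omega
    _ ≤ 2 * p^b := by
        rw [h3]
        nlinarith [pow_pos hp.pos (b-1)]

lemma smooth_coprime_bound : ∀ t : ℕ, 1 < t →
    (∀ q : ℕ, q.Prime → q ∣ t → ¬ q ∣ k * (k+1)) →
    (3 * shallitZ k t ≤ 2 * t) ∧ (¬ IsPrimePow t → 9 * shallitZ k t ≤ 4 * t) := by
  intro t
  induction t using Nat.strong_induction_on with
  | _ t ih =>
    intro ht hq
    have hp : t.minFac.Prime := Nat.minFac_prime (by omega)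
    set p := t.minFac with hpdef
    set e := t.factorization p with hedef
    set t' := t / p ^ e with ht'def
    have hfact : p ^ e * t' = t := Nat.ordProj_mul_ordCompl_eq_self t p
    have hpm : p ∣ t := Nat.minFac_dvd t
    have hepos : 0 < e := Nat.Prime.factorization_pos_of_dvd hp (by omega) hpm
    have ht' : 0 < t' := Nat.ordCompl_pos p (by omega)
    have ht'lt : t' < t := Nat.div_lt_self (by omega) (Nat.one_lt_pow hepos.ne' hp.one_lt)
    have hpc : ¬ p ∣ k * (k+1) := hq p hp hpm
    have hppow : 3 * shallitZ k (p^e) ≤ 2 * p^e := z_ppow_le hp hpc e hepos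
    rcases eq_or_lt_of_le (Nat.one_le_iff_ne_zero.mpr ht'.ne') with h1 | h1
    · -- t is a prime power
      have hteq : t = p ^ e := by rw [← hfact, ← h1, mul_one]
      constructor
      · rw [hteq]; exact hppow
      · intro hnpp
        exact absurd ⟨p, e, hp.prime, hepos, hteq.symm⟩ hnpp
    · -- at least two distinct primes
      have hq' : ∀ q : ℕ, q.Prime → q ∣ t' → ¬ q ∣ k * (k+1) := by
        intro q h1 h2
        exact hq q h1 (h2.trans (Nat.ordCompl_dvd t p))
      obtain ⟨hb1, _⟩ := ih t' ht'lt h1 hq'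
      have hco : Nat.Coprime (p^e) t' := Nat.Coprime.pow_left _ (by
        rw [Nat.Prime.coprime_iff_not_dvd hp]
        exact Nat.not_dvd_ordCompl hp (by omega))
      have hzmul : shallitZ k t = Nat.lcm (shallitZ k (p^e)) (shallitZ k t') := by
        rw [← hfact]
        exact z_mul hco (pow_pos hp.pos e) ht'
      have hlcm : shallitZ k t ≤ shallitZ k (p^e) * shallitZ k t' := by
        rw [hzmul]
        exact Nat.le_of_dvd (Nat.mul_pos (z_pos _ (pow_pos hp.pos e)) (z_pos _ ht'))
          (Nat.lcm_dvd_mul _ _)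
      have hbig : 9 * shallitZ k t ≤ 4 * t := by
        have := Nat.mul_le_mul hppow hb1
        calc 9 * shallitZ k t ≤ 9 * (shallitZ k (p^e) * shallitZ k t') := by omega
          _ = (3 * shallitZ k (p^e)) * (3 * shallitZ k t') := by ring
          _ ≤ (2 * p^e) * (2 * t') := this
          _ = 4 * (p^e * t') := by ring
          _ = 4 * t := by rw [hfact]
      exact ⟨by omega, fun _ => hbig⟩


lemma two_mul_le_of_dvd_lt {x y : ℕ} (h : x ∣ y) (hlt : x < y) : 2 * x ≤ y := by
  obtain ⟨d, rfl⟩ := h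
  rcases Nat.lt_or_ge d 2 with hd | hd
  · interval_cases d <;> omega
  · calc 2 * x = x * 2 := by ring
      _ ≤ x * d := Nat.mul_le_mul_left x hd

lemma prod_eq_of_le {x X y Y : ℕ} (hX : 0 < X) (hY : 0 < Y) (hx : x ≤ X) (hy : y ≤ Y)
    (h : x * y = X * Y) : x = X ∧ y = Y := by
  constructor <;> nlinarith

end ShallitAux


open ShallitAux in
theorem stmt13 (k m : ℕ) (hk : 1 ≤ k) (hm : 1 ≤ m)
    (h1 : m < 2 * shallitZ k m) (h2 : shallitZ k m < m) :
    ∃ p : ℕ, ∃ hp : p.Prime, ¬ p ∣ k * (k + 1) ∧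
      2 * p * shallitZ k m = m * (p + 1) ∧
      2 * shallitZ k p = p + 1 ∧
      @legendreSym p ⟨hp⟩ ((k : ℤ) * ((k : ℤ) + 1)) = -1 ∧
      ∃ a b : ℕ, m = a * p ^ b ∧ a ∈ setP (k * (k + 1)) ∧ shallitZ k a = a ∧
        Nat.gcd a (p * (p + 1) / 2) = 1 ∧ 1 ≤ b ∧
        (2 ≤ b → 2 * shallitZ k (p ^ 2) = p * (p + 1)) := by
  classical
  obtain ⟨a, t, hmeq, ha, ht, hqa, hqt, hco⟩ := split_smooth (k*(k+1)) m hm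
  have hza_dvd : shallitZ k a ∣ a := z_dvd_self_smooth ha hqa
  have hza_pos : 0 < shallitZ k a := z_pos _ ha
  have hza_le : shallitZ k a ≤ a := Nat.le_of_dvd ha hza_dvd
  -- t ≠ 1
  rcases eq_or_lt_of_le (Nat.one_le_iff_ne_zero.mpr ht.ne') with ht1 | ht1
  · exfalso
    have hma : m = a := by rw [hmeq, ← ht1, mul_one]
    have hzm_dvd : shallitZ k m ∣ m := by rw [hma]; exact hza_dvd
    have := two_mul_le_of_dvd_lt hzm_dvd h2
    omega
  have hzm_eq : shallitZ k m = Nat.lcm (shallitZ k a) (shallitZ k t) := by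
    rw [hmeq]; exact z_mul hco ha ht
  have hzt_pos : 0 < shallitZ k t := z_pos _ ht
  have hzm_le : shallitZ k m ≤ shallitZ k a * shallitZ k t := by
    rw [hzm_eq]
    exact Nat.le_of_dvd (Nat.mul_pos hza_pos hzt_pos) (Nat.lcm_dvd_mul _ _)
  by_cases hppt : IsPrimePow t
  swap
  · exfalso
    obtain ⟨_, hbound⟩ := smooth_coprime_bound t ht1 hqt
    have h9 := hbound hppt
    have c1 : 18 * shallitZ k m ≤ 2 * a * (9 * shallitZ k t) :=
      calc 18 * shallitZ k m ≤ 18 * (shallitZ k a * shallitZ k t) := by omega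
        _ ≤ 18 * (a * shallitZ k t) :=
            Nat.mul_le_mul_left 18 (Nat.mul_le_mul_right _ hza_le)
        _ = 2 * a * (9 * shallitZ k t) := by ring
    have c2 : 2 * a * (9 * shallitZ k t) ≤ 2 * a * (4 * t) := Nat.mul_le_mul_left _ h9
    have c3 : 2 * a * (4 * t) = 8 * m := by rw [hmeq]; ring
    omega
  obtain ⟨p, b, hpp, hb, hpbt⟩ := hppt
  have hp : p.Prime := hpp.nat_prime
  have hpc : ¬ p ∣ k * (k+1) := hqt p hp (by rw [← hpbt]; exact dvd_pow_self p hb.ne')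
  have hp2 : p ≠ 2 := odd_of_not_dvd hp hpc
  have hodd : p % 2 = 1 := hp.eq_two_or_odd.resolve_left hp2
  have hp3 : 3 ≤ p := by have := hp.two_le; omega
  haveI := Fact.mk hp
  have hne : (((k*(k+1):ℕ):ℤ) : ZMod p) ≠ 0 := by
    rw [Ne, ZMod.intCast_zmod_eq_zero_iff_dvd]
    intro h
    exact hpc (Int.ofNat_dvd.mp (by exact_mod_cast h))
  have hpb_pos : 0 < p ^ b := pow_pos hp.pos b
  have hpb1_pos : 0 < p ^ (b-1) := pow_pos hp.pos _
  have hzp_pos : 0 < shallitZ k p := z_pos _ hp.pos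
  have hzpb_dvd : shallitZ k (p^b) ∣ p^(b-1) * shallitZ k p := z_ppow_dvd hp b
  have hzpb_pos : 0 < shallitZ k (p^b) := z_pos _ hpb_pos
  have hmeq' : m = a * p^b := by rw [hmeq, hpbt]
  have hzm_eq' : shallitZ k m = Nat.lcm (shallitZ k a) (shallitZ k (p^b)) := by
    rw [hzm_eq, hpbt]
  have hpow1 : p^(b-1) * p = p^b := by
    rw [← pow_succ]
    congr 1
    omega
  have hzm_le' : shallitZ k m ≤ shallitZ k a * shallitZ k (p^b) := by
    rw [hzm_eq']
    exact Nat.le_of_dvd (Nat.mul_pos hza_pos hzpb_pos) (Nat.lcm_dvd_mul _ _)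
  rcases legendreSym.eq_one_or_neg_one p hne with hleg | hleg
  · exfalso
    have hzp_dvd : shallitZ k p ∣ (p-1)/2 :=
      (z_dvd_iff hp.pos _).mpr ((legendre_apparition hp hp2 hpc).1 hleg)
    have hzp_le : 2 * shallitZ k p ≤ p - 1 := by
      have := Nat.le_of_dvd (by omega) hzp_dvd
      omega
    have cfin : 2 * shallitZ k m < m :=
      calc 2 * shallitZ k m ≤ 2 * (shallitZ k a * shallitZ k (p^b)) := by omega
        _ ≤ 2 * (a * (p^(b-1) * shallitZ k p)) :=
            Nat.mul_le_mul_left 2 (Nat.mul_le_mul hza_le (Nat.le_of_dvd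
              (Nat.mul_pos hpb1_pos hzp_pos) hzpb_dvd))
        _ = a * p^(b-1) * (2 * shallitZ k p) := by ring
        _ ≤ a * p^(b-1) * (p-1) := Nat.mul_le_mul_left _ hzp_le
        _ < a * p^(b-1) * p :=
            (Nat.mul_lt_mul_left (Nat.mul_pos ha hpb1_pos)).mpr (by omega)
        _ = m := by rw [hmeq', mul_assoc, hpow1]
    omega
  -- main branch : Legendre symbol is -1
  have hzp_dvd_w : shallitZ k p ∣ (p+1)/2 :=
    (z_dvd_iff hp.pos _).mpr ((legendre_apparition hp hp2 hpc).2 hleg)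
  set w := (p+1)/2 with hwdef
  have hw2 : 2 * w = p + 1 := by omega
  have hw_pos : 0 < w := by omega
  have hw_le_p : w ≤ p := by omega
  set N := a * (p^(b-1) * w) with hNdef
  have hNpos : 0 < N := Nat.mul_pos ha (Nat.mul_pos hpb1_pos hw_pos)
  have hLdvdN : shallitZ k m ∣ N := by
    rw [hzm_eq']
    apply Nat.lcm_dvd
    · exact hza_dvd.trans (Dvd.intro _ rfl)
    · exact (hzpb_dvd.trans (mul_dvd_mul_left _ hzp_dvd_w)).trans (dvd_mul_left _ _)
  have hNle : N ≤ m := by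
    rw [hmeq', ← hpow1]
    calc a * (p^(b-1) * w) ≤ a * (p^(b-1) * p) :=
          Nat.mul_le_mul_left a (Nat.mul_le_mul_left _ hw_le_p)
      _ = a * (p^(b-1)) * p := by ring
      _ = a * (p^(b-1) * p) := by ring
  have hLN : shallitZ k m = N := by
    by_contra hne'
    have hlt : shallitZ k m < N :=
      lt_of_le_of_ne (Nat.le_of_dvd hNpos hLdvdN) hne'
    have := two_mul_le_of_dvd_lt hLdvdN hlt
    omega
  have hchain1 : shallitZ k a * shallitZ k (p^b) ∣ N :=
    mul_dvd_mul hza_dvd (hzpb_dvd.trans (mul_dvd_mul_left _ hzp_dvd_w))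
  have hNdvd : N ∣ shallitZ k a * shallitZ k (p^b) := by
    have h5 := Nat.lcm_dvd_mul (shallitZ k a) (shallitZ k (p^b))
    rw [← hzm_eq', hLN] at h5
    exact h5
  have hNeq : shallitZ k a * shallitZ k (p^b) = N := Nat.dvd_antisymm hchain1 hNdvd
  have hmid : a * (p^(b-1) * shallitZ k p) = N := by
    apply Nat.dvd_antisymm
    · exact mul_dvd_mul_left a (mul_dvd_mul_left _ hzp_dvd_w)
    · rw [← hNeq]
      exact mul_dvd_mul hza_dvd hzpb_dvd
  have hzp_eq : shallitZ k p = w := by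
    have h6 : a * (p^(b-1) * shallitZ k p) = a * (p^(b-1) * w) := by rw [hmid, hNdef]
    have h7 := Nat.eq_of_mul_eq_mul_left ha h6
    exact Nat.eq_of_mul_eq_mul_left hpb1_pos h7
  have hzpb_le : shallitZ k (p^b) ≤ p^(b-1) * w := by
    rw [← hzp_eq]
    exact Nat.le_of_dvd (Nat.mul_pos hpb1_pos hzp_pos) hzpb_dvd
  obtain ⟨hza_eq, hzpb_eq⟩ := prod_eq_of_le ha (Nat.mul_pos hpb1_pos hw_pos) hza_le hzpb_le hNeq
  have hgcd1 : Nat.gcd (shallitZ k a) (shallitZ k (p^b)) = 1 := by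
    have hg := Nat.gcd_mul_lcm (shallitZ k a) (shallitZ k (p^b))
    rw [← hzm_eq', hLN, hNeq] at hg
    have h1' : Nat.gcd (shallitZ k a) (shallitZ k (p^b)) * N = 1 * N := by
      rw [hg, one_mul]
    exact Nat.eq_of_mul_eq_mul_right hNpos h1' 
  have hcop_ap : Nat.Coprime a p :=
    Nat.Coprime.coprime_dvd_right (dvd_pow_self p hb.ne') (hpbt ▸ hco)
  have hcop_aw : Nat.Coprime a w := by
    have h8 : Nat.Coprime a (p^(b-1) * w) := by
      rw [hza_eq, hzpb_eq] at hgcd1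
      exact hgcd1
    exact h8.coprime_dvd_right (dvd_mul_left w _)
  refine ⟨p, hp, hpc, ?_, ?_, ?_, a, b, hmeq', ⟨ha, hqa⟩, hza_eq, ?_, hb, ?_⟩
  · -- 2 p z(m) = m (p+1)
    rw [hLN, hNdef, hmeq']
    calc 2 * p * (a * (p^(b-1) * w)) = a * (p^(b-1) * p) * (2 * w) := by ring
      _ = a * p^b * (p+1) := by rw [hpow1, hw2]
  · -- 2 z(p) = p + 1
    rw [hzp_eq]; omega
  · -- Legendre symbol
    have hcasteq : ((k*(k+1):ℕ) : ℤ) = (k : ℤ) * ((k : ℤ) + 1) := by push_cast; ring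
    rw [← hcasteq]
    exact hleg
  · -- gcd a (p(p+1)/2) = 1
    have h9 : p * (p+1) / 2 = p * w := by
      have h10 : p * (p+1) = 2 * (p * w) := by rw [← hw2]; ring
      rw [h10, Nat.mul_div_cancel_left _ two_pos]
    rw [h9]
    exact Nat.Coprime.mul_right hcop_ap hcop_aw
  · -- b ≥ 2 implies 2 z(p²) = p(p+1)
    intro hb2
    have hp2_pos : 0 < p^2 := pow_pos hp.pos 2
    have h2a : shallitZ k p ∣ shallitZ k (p^2) := z_p_dvd_z_ppow hp two_pos
    have h2b : shallitZ k (p^2) ∣ p * shallitZ k p := by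
      have := z_ppow_dvd (k := k) hp 2
      simpa using this
    obtain ⟨s, hs⟩ := h2a
    have hsp : s ∣ p := by
      rw [hs] at h2b
      rw [mul_comm p (shallitZ k p)] at h2b
      exact (Nat.mul_dvd_mul_iff_left hzp_pos).mp h2b
    rcases (Nat.dvd_prime hp).mp hsp with rfl | hs2
    · -- s = 1 : contradiction with b ≥ 2
      exfalso
      rw [mul_one] at hs
      have hU2 : ((p:ℤ))^2 ∣ shallitU k (shallitZ k p) := by
        have h11 := (z_mem (k := k) (p^2) hp2_pos).2
        rw [← hs]
        push_cast at h11
        exact h11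
      have h12 := lift_pows (k := k) hp.two_le (by norm_num : 1 ≤ 2) hU2 (b-2)
      have h13 : 2 + (b-2) = b := by omega
      rw [h13] at h12
      have h14 : shallitZ k (p^b) ∣ p^(b-2) * shallitZ k p := by
        rw [z_dvd_iff hpb_pos]
        push_cast
        exact h12
      rw [hzpb_eq, hzp_eq] at h14
      have h15 : p^(b-1) * w ≤ p^(b-2) * w :=
        Nat.le_of_dvd (Nat.mul_pos (pow_pos hp.pos _) hw_pos) h14
      have h16 : p^(b-1) ≤ p^(b-2) := Nat.le_of_mul_le_mul_right h15 hw_pos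
      have h17 : p^(b-2) < p^(b-1) := Nat.pow_lt_pow_right hp.one_lt (by omega)
      omega
    · -- s = p
      rw [hs2] at hs
      rw [hs, hzp_eq]
      calc 2 * (w * p) = (2 * w) * p := by ring
        _ = p * (p + 1) := by rw [hw2]; ring
end

section
/- Let k ≥ 1 be an integer and let m be a positive integer divisible by p² for some prime p not dividing k(k+1). Then z_k(m) ≤ 2m/3; if moreover k ≢ 1 (mod 9) and k ≢ 7 (mod 9), then z_k(m) ≤ 3m/5. If in addition m is even, then z_k(m) ≤ 3m/5, and if m is even and k ≡ 0, 2 or 4 (mod 5), then z_k(m) ≤ 7m/13. -/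
lemma shallitU_zero (k : ℕ) : shallitU k 0 = 0 := rfl
lemma shallitU_one (k : ℕ) : shallitU k 1 = 1 := rfl
lemma shallitU_two (k : ℕ) : shallitU k 2 = 4 * (k:ℤ) + 2 := by
  show (4 * (k : ℤ) + 2) * shallitU k 1 - shallitU k 0 = _
  simp [shallitU]
lemma shallitU_rec (k n : ℕ) :
    shallitU k (n+2) = (4 * (k : ℤ) + 2) * shallitU k (n + 1) - shallitU k n := rfl

lemma addF (k : ℕ) : ∀ m n : ℕ, shallitU k (m + n + 1)
    = shallitU k (m+1) * shallitU k (n+1) - shallitU k m * shallitU k n := by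
  intro m
  induction m using Nat.twoStepInduction with
  | zero => intro n; simp [shallitU]
  | one =>
      intro n
      have h1 : 1 + n + 1 = n + 2 := by ring
      rw [h1, shallitU_rec, shallitU_two, shallitU_one]; ring
  | more m ih1 ih2 =>
      intro n
      have e1 : m + 2 + n + 1 = (m + n + 1) + 2 := by ring
      rw [e1, shallitU_rec]
      have e2 : m + n + 1 + 1 = (m+1) + n + 1 := by ring
      rw [e2, ih2 n, ih1 n]
      have e3 : m + 1 + 1 = m + 2 := by ring
      rw [show m+1+1+1 = (m+1)+2 from rfl, shallitU_rec k (m+1), shallitU_rec k m]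
      ring

lemma shallitU_dvd_mul (k n : ℕ) : ∀ t : ℕ, shallitU k n ∣ shallitU k (n * t) := by
  intro t
  rcases Nat.eq_zero_or_pos n with h | h
  · subst h; simp
  obtain ⟨b, rfl⟩ : ∃ b, n = b + 1 := ⟨n - 1, by omega⟩
  induction t with
  | zero => simp [shallitU]
  | succ t ih =>
      have e : (b+1) * (t+1) = (b+1)*t + b + 1 := by ring
      rw [e, addF]
      exact dvd_sub (Dvd.dvd.mul_left dvd_rfl _) (ih.mul_right _)

/-- Key congruence: `U_{n(t+1)} ≡ (t+1) U_n C^t` and `U_{n(t+1)+1} ≡ C^{t+1}` mod `U_n²`. -/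
lemma key (k b : ℕ) : ∀ t : ℕ, ∃ w₁ w₂ : ℤ,
    shallitU k ((b+1) * (t+1)) =
      (t+1) * shallitU k (b+1) * (shallitU k (b+2))^t + (shallitU k (b+1))^2 * w₁ ∧
    shallitU k ((b+1) * (t+1) + 1) =
      (shallitU k (b+2))^(t+1) + (shallitU k (b+1))^2 * w₂ := by
  intro t
  induction t with
  | zero => exact ⟨0, 0, by simp, by simp [mul_one]⟩
  | succ t ih =>
      obtain ⟨w₁, w₂, h1, h2⟩ := ih
      set P : ℤ := 4 * (k:ℤ) + 2 with hP
      set u : ℤ := shallitU k (b+1) with hu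
      set C : ℤ := shallitU k (b+2) with hC
      have hb : shallitU k b = P * u - C := by
        have := shallitU_rec k b; rw [← hu, ← hC] at this; simp only [hP]; linarith [this]
      have e1 : (b+1) * (t+2) = (b+1)*(t+1) + b + 1 := by ring
      have e2 : (b+1) * (t+2) + 1 = (b+1)*(t+1) + (b+1) + 1 := by ring
      refine ⟨u * w₂ - (t+1) * P * C^t - w₁ * P * u + w₁ * C,
              C * w₂ - (t+1) * C^t - w₁ * u, ?_, ?_⟩
      · rw [e1, addF, h1, h2, hb]
        push_cast
        ring
      · rw [e2, addF, h1, h2]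
        rw [show b + 1 + 1 = b + 2 from rfl, ← hu, ← hC]
        push_cast
        ring

lemma liftOnce (k p n j : ℕ) (hp : 1 ≤ p) (hn : 1 ≤ n) (hj : 1 ≤ j)
    (h : (p:ℤ)^j ∣ shallitU k n) : (p:ℤ)^(j+1) ∣ shallitU k (n * p) := by
  obtain ⟨b, rfl⟩ : ∃ b, n = b + 1 := ⟨n - 1, by omega⟩
  obtain ⟨t, rfl⟩ : ∃ t, p = t + 1 := ⟨p - 1, by omega⟩
  obtain ⟨w₁, w₂, h1, _⟩ := key k b t
  rw [h1]
  have h2 : (↑(t+1):ℤ)^(j+1) ∣ (shallitU k (b+1))^2 * w₁ := by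
    refine dvd_mul_of_dvd_left (dvd_trans ?_ (pow_dvd_pow_of_dvd h 2)) _
    rw [← pow_mul]
    exact pow_dvd_pow _ (by omega)
  refine dvd_add ?_ h2
  have h' : ((t:ℤ)+1)^j ∣ shallitU k (b+1) := by push_cast at h; exact h
  have h3 : ((t:ℤ)+1) * ((t:ℤ)+1)^j ∣ ((t:ℤ)+1) * shallitU k (b+1) * (shallitU k (b+2))^t :=
    (mul_dvd_mul_left _ h').mul_right _
  have e : ((t:ℤ)+1) * ((t:ℤ)+1)^j = (↑(t+1):ℤ)^(j+1) := by push_cast; ring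
  rw [e] at h3
  convert h3 using 2 <;> push_cast <;> ring

lemma liftIter (k p n j : ℕ) (hp : 1 ≤ p) (hn : 1 ≤ n) (hj : 1 ≤ j)
    (h : (p:ℤ)^j ∣ shallitU k n) : ∀ i : ℕ, (p:ℤ)^(j+i) ∣ shallitU k (n * p^i) := by
  intro i
  induction i with
  | zero => simpa using h
  | succ i ih =>
      have := liftOnce k p (n * p^i) (j+i) hp (Nat.mul_pos hn (pow_pos hp i)) (by omega) ih
      rw [show n * p^i * p = n * p^(i+1) by ring] at this
      rw [show j + (i+1) = j + i + 1 by ring]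
      exact this

lemma baseDvdK (k q : ℕ) (h : q ∣ k) : ∀ n : ℕ, (shallitU k n) ≡ (n:ℤ) [ZMOD (q:ℤ)] := by
  intro n
  induction n using Nat.twoStepInduction with
  | zero => simp [shallitU]
  | one => simp [shallitU]
  | more n ih1 ih2 =>
      rw [shallitU_rec]
      obtain ⟨c, hc⟩ := h
      have hk4 : 4 * (k:ℤ) + 2 = (q:ℤ) * (4*c) + 2 := by
        have : (k:ℤ) = (q:ℤ) * c := by exact_mod_cast hc
        linarith
      rw [hk4]
      calc ((q:ℤ) * (4*c) + 2) * shallitU k (n+1) - shallitU k n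
          ≡ ((q:ℤ) * (4*c) + 2) * ((n:ℤ)+1) - (n:ℤ) [ZMOD (q:ℤ)] :=
            Int.ModEq.sub (Int.ModEq.mul_left _ (by exact_mod_cast ih2)) (by exact_mod_cast ih1)
        _ ≡ (0 + 2) * ((n:ℤ)+1) - (n:ℤ) [ZMOD (q:ℤ)] := by
            apply Int.ModEq.sub _ Int.ModEq.rfl
            apply Int.ModEq.mul _ Int.ModEq.rfl
            apply Int.ModEq.add _ Int.ModEq.rfl
            exact (Int.modEq_iff_dvd.mpr (by simpa using Dvd.intro _ rfl)).symm
        _ = (n:ℤ) + 2 := by ring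
        _ = ((n:ℕ)+2 : ℕ) := by push_cast; ring
lemma baseDvdK1 (k q : ℕ) (h : q ∣ (k+1)) :
    ∀ n : ℕ, (shallitU k n) ≡ (-1)^(n+1) * (n:ℤ) [ZMOD (q:ℤ)] := by
  intro n
  induction n using Nat.twoStepInduction with
  | zero => simp [shallitU]
  | one => simp [shallitU]
  | more n ih1 ih2 =>
      rw [shallitU_rec]
      obtain ⟨c, hc⟩ := h
      have hk4 : 4 * (k:ℤ) + 2 = (q:ℤ) * (4*c) - 2 := by
        have : (k:ℤ) + 1 = (q:ℤ) * c := by exact_mod_cast hc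
        linarith
      rw [hk4]
      calc ((q:ℤ) * (4*c) - 2) * shallitU k (n+1) - shallitU k n
          ≡ ((q:ℤ) * (4*c) - 2) * ((-1)^(n+2) * ((n:ℤ)+1)) - (-1)^(n+1) * (n:ℤ) [ZMOD (q:ℤ)] :=
            Int.ModEq.sub (Int.ModEq.mul_left _ (by exact_mod_cast ih2)) ih1
        _ ≡ (0 - 2) * ((-1)^(n+2) * ((n:ℤ)+1)) - (-1)^(n+1) * (n:ℤ) [ZMOD (q:ℤ)] := by
            apply Int.ModEq.sub _ Int.ModEq.rfl
            apply Int.ModEq.mul _ Int.ModEq.rfl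
            apply Int.ModEq.sub _ Int.ModEq.rfl
            exact (Int.modEq_iff_dvd.mpr (by simpa using Dvd.intro _ rfl)).symm
        _ = (-1)^(n+2+1) * ((n:ℤ)+2) := by ring

lemma rankBound (k p : ℕ) (hp : p.Prime) (hp2 : p ≠ 2) (hkk : ¬ p ∣ k * (k+1)) :
    ∃ c : ℕ, 0 < c ∧ 2 * c ≤ p + 1 ∧ (p:ℤ) ∣ shallitU k c := by
  haveI : Fact p.Prime := ⟨hp⟩
  set K := AlgebraicClosure (ZMod p) with hK
  haveI : CharP K p := charP_of_injective_algebraMap (algebraMap (ZMod p) K).injective p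
  have hp_odd : p % 2 = 1 := (Nat.Prime.mod_two_eq_one_iff_ne_two hp).mpr hp2
  have hp3 : 3 ≤ p := by
    have := hp.two_le; omega
  set φ : ZMod p →+* K := algebraMap (ZMod p) K with hφ
  have hφinj : Function.Injective φ := φ.injective
  -- basic nonvanishing
  have h2Z : (2 : ZMod p) ≠ 0 := by
    have : ((2:ℕ) : ZMod p) = 0 ↔ p ∣ 2 := ZMod.natCast_eq_zero_iff 2 p
    intro h
    have h2 : p ∣ 2 := this.mp (by exact_mod_cast h)
    have := Nat.le_of_dvd (by norm_num) h2
    have := hp.two_le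
    omega
  have h2K : (2 : K) ≠ 0 := by
    intro h
    apply h2Z
    apply hφinj
    rw [map_ofNat, map_zero]
    exact h
  have h4K : (4 : K) ≠ 0 := by
    intro h
    apply h2K
    have : (4:K) = 2 * 2 := by norm_num
    rw [this] at h
    rcases mul_eq_zero.mp h with h | h <;> exact h
  set d : ZMod p := 4 * (k : ZMod p) + 2 with hd
  set D : ZMod p := d^2 - 4 with hD
  have hkkZ : ((k * (k+1) : ℕ) : ZMod p) ≠ 0 := by
    rw [Ne, ZMod.natCast_eq_zero_iff]
    exact hkk
  have hDne : D ≠ 0 := by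
    have hDval : D = 16 * ((k * (k+1) : ℕ) : ZMod p) := by
      rw [hD, hd]; push_cast; ring
    rw [hDval]
    have h16 : (16 : ZMod p) ≠ 0 := by
      intro h
      apply h2Z
      have : (16:ZMod p) = 2^4 := by norm_num
      rw [this] at h
      exact pow_eq_zero_iff (by norm_num) |>.mp h
    exact mul_ne_zero h16 hkkZ
  obtain ⟨s, hs⟩ : ∃ s : K, s ^ 2 = φ D := IsAlgClosed.exists_pow_nat_eq (φ D) (by norm_num)
  have hsne : s ≠ 0 := by
    intro h
    rw [h] at hs
    apply hDne
    apply hφinj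
    rw [map_zero]
    simpa using hs.symm
  set X : K := φ d with hX
  have hXval : X = 4 * (k : K) + 2 := by
    rw [hX, hd]
    rw [map_add, map_mul, map_natCast, map_ofNat, map_ofNat]
  have hs2 : s^2 = X^2 - 4 := by
    rw [hs, hD, map_sub, map_pow, map_ofNat]
  set α : K := X + s with hα
  set β : K := X - s with hβ
  have hαβ : α * β = 4 := by
    rw [hα, hβ]
    have : (X+s)*(X-s) = X^2 - s^2 := by ring
    rw [this, hs2]; ring
  -- the fundamental evaluation of shallitU in K
  have uval : ∀ n : ℕ, α^n - β^n = 2^n * s * ((shallitU k n : ℤ) : K) := by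
    intro n
    induction n using Nat.twoStepInduction with
    | zero => simp [shallitU]
    | one => simp only [shallitU, pow_one]; rw [hα, hβ]; push_cast; ring
    | more n ih1 ih2 =>
        have hrec : ((shallitU k (n+2) : ℤ) : K)
            = (4*(k:K)+2) * ((shallitU k (n+1) : ℤ) : K) - ((shallitU k n : ℤ) : K) := by
          rw [shallitU_rec]; push_cast; ring
        have hsum : α + β = 2 * X := by rw [hα, hβ]; ring
        have hid : α^(n+2) - β^(n+2)
            = (α + β) * (α^(n+1) - β^(n+1)) - (α * β) * (α^n - β^n) := by ring
        rw [hid, hsum, hαβ, ih1, ih2, hrec, hXval]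
        ring
  -- Frobenius action
  have hpsplit : p = 2 * ((p-1)/2) + 1 := by omega
  have hsp : s^p = s * φ (D ^ ((p-1)/2)) := by
    have e : s ^ p = s ^ (2 * ((p-1)/2) + 1) := by
      congr 1
    rw [e, pow_succ, pow_mul, hs, ← map_pow]
    ring
  have hXp : X^p = X := by rw [hX, ← map_pow, ZMod.pow_card]
  have hαp : α^p = X + s^p := by rw [hα, add_pow_char, hXp]
  have hβp : β^p = X - s^p := by rw [hβ, sub_pow_char, hXp]
  have hχ : D ^ ((p-1)/2) = 1 ∨ D ^ ((p-1)/2) = -1 := by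
    apply mul_self_eq_one_iff.mp
    rw [← pow_add]
    have : (p-1)/2 + (p-1)/2 = p - 1 := by omega
    rw [this]
    exact ZMod.pow_card_sub_one_eq_one hDne
  have h2p1 : (2:K) ^ (p-1) = 1 := by
    have : ((2:ZMod p))^(p-1) = 1 := ZMod.pow_card_sub_one_eq_one h2Z
    have h := congrArg φ this
    rw [map_pow, map_one, map_ofNat] at h
    exact h
  have key0 : ∀ c : ℕ, α^c = β^c → (p:ℤ) ∣ shallitU k c := by
    intro c hxy
    have h0 : 2^c * s * ((shallitU k c : ℤ) : K) = 0 := by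
      rw [← uval c, hxy, sub_self]
    have hU : ((shallitU k c : ℤ) : K) = 0 := by
      rcases mul_eq_zero.mp h0 with h | h
      · rcases mul_eq_zero.mp h with h | h
        · exact absurd h (pow_ne_zero _ h2K)
        · exact absurd h hsne
      · exact h
    have : φ ((shallitU k c : ℤ) : ZMod p) = 0 := by
      rw [map_intCast]; exact hU
    have : ((shallitU k c : ℤ) : ZMod p) = 0 := by
      apply hφinj; rw [map_zero]; exact this
    exact (ZMod.intCast_zmod_eq_zero_iff_dvd _ p).mp this
  rcases hχ with hχ | hχ
  · -- split case: use c = (p-1)/2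
    refine ⟨(p-1)/2, by omega, by omega, ?_⟩
    apply key0
    have hsps : s^p = s := by rw [hsp, hχ, map_one, mul_one]
    have hαpα : α^p = α := by rw [hαp, hsps]
    have hβpβ : β^p = β := by rw [hβp, hsps]
    have hαne : α ≠ 0 := by
      intro h; rw [h, zero_mul] at hαβ; exact h4K hαβ.symm
    have hβne : β ≠ 0 := by
      intro h; rw [h, mul_zero] at hαβ; exact h4K hαβ.symm
    have hα1 : α^(p-1) = 1 := by
      have : α^(p-1) * α = 1 * α := by
        rw [one_mul, ← pow_succ]
        rw [show p - 1 + 1 = p by omega]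
        exact hαpα
      exact mul_right_cancel₀ hαne this
    have hβ1 : β^(p-1) = 1 := by
      have : β^(p-1) * β = 1 * β := by
        rw [one_mul, ← pow_succ]
        rw [show p - 1 + 1 = p by omega]
        exact hβpβ
      exact mul_right_cancel₀ hβne this
    set c := (p-1)/2 with hc
    have hcc : c + c = p - 1 := by omega
    have hx2 : α^c * α^c = 1 := by rw [← pow_add, hcc]; exact hα1
    have hxy : α^c * β^c = 1 := by
      rw [← mul_pow, hαβ]
      have : (4:K) = 2^2 := by norm_num
      rw [this, ← pow_mul]
      rw [show 2 * c = p - 1 by omega]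
      exact h2p1
    calc α^c = α^c * (α^c * β^c) := by rw [hxy, mul_one]
      _ = (α^c * α^c) * β^c := by ring
      _ = β^c := by rw [hx2, one_mul]
  · -- inert case: use c = (p+1)/2
    refine ⟨(p+1)/2, by omega, by omega, ?_⟩
    apply key0
    have hsps : s^p = -s := by
      rw [hsp, hχ]
      simp
      exact mul_neg_one s
    have hαpβ : α^p = β := by rw [hαp, hsps, hβ]; ring
    have hβpα : β^p = α := by rw [hβp, hsps, hα]; ring
    set c := (p+1)/2 with hc
    have hcc : c + c = p + 1 := by omega
    have hx2 : α^c * α^c = 4 := by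
      rw [← pow_add, hcc, pow_succ, hαpβ, mul_comm]
      exact hαβ
    have hy2 : β^c * β^c = 4 := by
      rw [← pow_add, hcc, pow_succ, hβpα]
      exact hαβ
    have hxy : α^c * β^c = 4 := by
      rw [← mul_pow, hαβ]
      have : (4:K) = 2^2 := by norm_num
      rw [this, ← pow_mul]
      rw [show 2 * c = p + 1 by omega]
      rw [show p + 1 = 2 + (p-1) by omega, pow_add, h2p1, mul_one]
    have h4 : 4 * α^c = 4 * β^c := by
      calc 4 * α^c = (α^c * β^c) * α^c := by rw [hxy]
        _ = (α^c * α^c) * β^c := by ring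
        _ = 4 * β^c := by rw [hx2]
    exact mul_left_cancel₀ h4K h4

lemma baseU (k q : ℕ) (hq : q ∣ k ∨ q ∣ (k+1)) : (q:ℤ) ∣ shallitU k q := by
  rcases hq with h | h
  · have h1 := (baseDvdK k q h q).symm.dvd
    have h2 : (q:ℤ) ∣ (q:ℤ) := dvd_rfl
    have := dvd_add h1 h2
    simpa using this
  · have h1 := (baseDvdK1 k q h q).symm.dvd
    have h2 : (q:ℤ) ∣ (-1)^(q+1) * (q:ℤ) := Dvd.dvd.mul_left dvd_rfl _
    have := dvd_add h1 h2
    simpa using this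

lemma primePowIndex (k q f : ℕ) (hq : q.Prime) (hf : 1 ≤ f) :
    ∃ n : ℕ, 0 < n ∧ n ≤ q^f ∧ ((q^f : ℕ) : ℤ) ∣ shallitU k n ∧ (q = 2 → n = 2^f) := by
  by_cases hdvd : q ∣ k * (k+1)
  · refine ⟨q^f, pow_pos hq.pos f, le_rfl, ?_, fun h => by rw [h]⟩
    have base : (q:ℤ)^1 ∣ shallitU k q := by
      simpa using baseU k q ((Nat.Prime.dvd_mul hq).mp hdvd)
    have := liftIter k q q 1 hq.pos hq.pos le_rfl base (f-1)
    rw [show q * q^(f-1) = q^f by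
      rw [← pow_succ']
      congr 1
      omega] at this
    rw [show (1:ℕ) + (f-1) = f by omega] at this
    exact_mod_cast this
  · have hq2 : q ≠ 2 := by
      intro h
      apply hdvd
      rw [h]
      exact even_iff_two_dvd.mp (Nat.even_mul_succ_self k)
    obtain ⟨c, hc0, hcb, hcd⟩ := rankBound k q hq hq2 hdvd
    refine ⟨c * q^(f-1), Nat.mul_pos hc0 (pow_pos hq.pos _), ?_, ?_, fun h => absurd h hq2⟩
    · calc c * q^(f-1) ≤ q * q^(f-1) := by
            have : c ≤ q := by have := hq.two_le; omega
            exact Nat.mul_le_mul_right _ this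
        _ = q^f := by rw [← pow_succ']; congr 1; omega
    · have base : (q:ℤ)^1 ∣ shallitU k c := by simpa using hcd
      have := liftIter k q c 1 hq.pos hc0 le_rfl base (f-1)
      rw [show (1:ℕ) + (f-1) = f by omega] at this
      exact_mod_cast this

lemma existsIndex (k : ℕ) : ∀ m : ℕ, 0 < m →
    ∃ N, 0 < N ∧ N ≤ m ∧ ((m : ℕ) : ℤ) ∣ shallitU k N ∧ (2 ∣ m → 2 ∣ N) := by
  intro m
  induction m using Nat.strong_induction_on with
  | _ m ih =>
    intro hm
    rcases Nat.lt_or_ge m 2 with h1 | h2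
    · refine ⟨1, one_pos, by omega, ?_, by omega⟩
      have : m = 1 := by omega
      rw [this]
      simp
    · set q := m.minFac with hqdef
      have hqp : q.Prime := Nat.minFac_prime (by omega)
      have hqd : q ∣ m := Nat.minFac_dvd m
      set f := m.factorization q with hfdef
      have hf : 1 ≤ f := hqp.factorization_pos_of_dvd (by omega) hqd
      have hord : q^f ∣ m := Nat.ordProj_dvd m q
      set m₀ := m / q^f with hm₀def
      have hm₀mul : q^f * m₀ = m := Nat.mul_div_cancel' hord
      have hnd : ¬ q ∣ m₀ := Nat.not_dvd_ordCompl hqp (by omega)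
      have hm₀pos : 0 < m₀ := Nat.ordCompl_pos q (by omega)
      have hm₀lt : m₀ < m := by
        apply Nat.div_lt_self hm
        exact Nat.one_lt_pow (by omega) hqp.two_le
      obtain ⟨N₀, hN₀pos, hN₀le, hN₀dvd, hN₀even⟩ := ih m₀ hm₀lt hm₀pos
      obtain ⟨n, hnpos, hnle, hndvd, hn2⟩ := primePowIndex k q f hqp hf
      refine ⟨N₀ * n, Nat.mul_pos hN₀pos hnpos, ?_, ?_, ?_⟩
      · calc N₀ * n ≤ m₀ * q^f := Nat.mul_le_mul hN₀le hnle
          _ = m := by rw [mul_comm]; exact hm₀mul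
      · have hco : Nat.Coprime (q^f) m₀ :=
          Nat.Coprime.pow_left _ (hqp.coprime_iff_not_dvd.mpr hnd)
      -- two divisibilities
        have d1 : ((q^f : ℕ) : ℤ) ∣ shallitU k (N₀ * n) := by
          refine dvd_trans hndvd ?_
          rw [mul_comm]
          exact shallitU_dvd_mul k n N₀
        have d2 : ((m₀ : ℕ) : ℤ) ∣ shallitU k (N₀ * n) :=
          dvd_trans hN₀dvd (shallitU_dvd_mul k N₀ n)
        have hcoZ : IsCoprime ((q^f : ℕ) : ℤ) ((m₀ : ℕ) : ℤ) :=
          Nat.isCoprime_iff_coprime.mpr hco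
        have := hcoZ.mul_dvd d1 d2
        rw [← Nat.cast_mul, hm₀mul] at this
        exact this
      · intro h2m
        have hq2 : q = 2 := by
          have hle : q ≤ 2 := Nat.minFac_le_of_dvd le_rfl h2m
          have := hqp.two_le
          omega
        have : n = 2^f := hn2 hq2
        have : 2 ∣ n := by rw [this]; exact dvd_pow_self 2 (by omega)
        exact Dvd.dvd.mul_left this N₀

theorem stmt15 (k : ℕ) (hk : 1 ≤ k) (m : ℕ) (hm : 1 ≤ m)
    (hp : ∃ p : ℕ, p.Prime ∧ ¬ p ∣ k * (k + 1) ∧ p ^ 2 ∣ m) :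
    3 * shallitZ k m ≤ 2 * m ∧
    (k % 9 ≠ 1 → k % 9 ≠ 7 → 5 * shallitZ k m ≤ 3 * m) ∧
    (Even m → 5 * shallitZ k m ≤ 3 * m) ∧
    (Even m → (k % 5 = 0 ∨ k % 5 = 2 ∨ k % 5 = 4) → 13 * shallitZ k m ≤ 7 * m) := by
  obtain ⟨p, hpp, hpkk, hp2m⟩ := hp
  have hp2 : p ≠ 2 := by
    intro h
    exact hpkk (h ▸ even_iff_two_dvd.mp (Nat.even_mul_succ_self k))
  have hpodd : p % 2 = 1 := Nat.odd_iff.mp (hpp.odd_of_ne_two hp2)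
  have hp3 : 3 ≤ p := by have := hpp.two_le; omega
  set e := m.factorization p with hedef
  have he2 : 2 ≤ e := (Nat.Prime.pow_dvd_iff_le_factorization hpp (by omega)).mp hp2m
  have hord : p^e ∣ m := Nat.ordProj_dvd m p
  set m' := m / p^e with hm'def
  have hmul : p^e * m' = m := Nat.mul_div_cancel' hord
  have hnd : ¬ p ∣ m' := Nat.not_dvd_ordCompl hpp (by omega)
  have hm'pos : 0 < m' := Nat.ordCompl_pos p (by omega)
  set P1 := p^(e-1) with hP1def
  have hpe : p^e = p * P1 := by
    rw [hP1def, ← pow_succ']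
    congr 1
    omega
  obtain ⟨N', hN'pos, hN'le, hN'dvd, hN'even⟩ := existsIndex k m' hm'pos
  obtain ⟨c, hc0, hcb, hcd⟩ := rankBound k p hpp hp2 hpkk
  have hUnp1 : ((p^e : ℕ) : ℤ) ∣ shallitU k (c * P1) := by
    have base : (p:ℤ)^1 ∣ shallitU k c := by simpa using hcd
    have := liftIter k p c 1 hpp.pos hc0 le_rfl base (e-1)
    rw [show (1:ℕ) + (e-1) = e by omega] at this
    exact_mod_cast this
  have mk : ∀ (g N : ℕ), ((p^e : ℕ) : ℤ) ∣ shallitU k g → (∃ t, N = g * t) →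
      (∃ s, N = N' * s) → ((m : ℕ) : ℤ) ∣ shallitU k N := by
    rintro g N hg ⟨t, rfl⟩ ⟨s, hs⟩
    have d1 : ((p^e : ℕ) : ℤ) ∣ shallitU k (g * t) :=
      dvd_trans hg (shallitU_dvd_mul k g t)
    have d2 : ((m' : ℕ) : ℤ) ∣ shallitU k (g * t) := by
      refine dvd_trans hN'dvd ?_
      rw [hs]
      exact shallitU_dvd_mul k N' s
    have hcoZ : IsCoprime ((p^e : ℕ) : ℤ) ((m' : ℕ) : ℤ) :=
      Nat.isCoprime_iff_coprime.mpr (Nat.Coprime.pow_left _ (hpp.coprime_iff_not_dvd.mpr hnd))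
    have := hcoZ.mul_dvd d1 d2
    rw [← Nat.cast_mul, hmul] at this
    exact this
  have zle : ∀ N : ℕ, 0 < N → ((m : ℕ) : ℤ) ∣ shallitU k N → shallitZ k m ≤ N := by
    intro N h1 h2
    exact Nat.sInf_le ⟨h1, h2⟩
  have hP1pos : 0 < P1 := pow_pos hpp.pos _
  -- Part 1 index
  have z1 : shallitZ k m ≤ N' * (c * P1) := by
    apply zle _ (Nat.mul_pos hN'pos (Nat.mul_pos hc0 hP1pos))
    exact mk (c * P1) _ hUnp1 ⟨N', by ring⟩ ⟨c * P1, rfl⟩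
  have bound1 : ∀ r s : ℕ, r * c ≤ s * p → r * (N' * (c * P1)) ≤ s * m := by
    intro r s hrs
    calc r * (N' * (c * P1)) = (r * c) * (N' * P1) := by ring
      _ ≤ (s * p) * (m' * P1) :=
          Nat.mul_le_mul hrs (Nat.mul_le_mul_right _ hN'le)
      _ = s * (p^e * m') := by rw [hpe]; ring
      _ = s * m := by rw [hmul]
  refine ⟨?_, ?_, ?_, ?_⟩
  · -- part 1
    calc 3 * shallitZ k m ≤ 3 * (N' * (c * P1)) := Nat.mul_le_mul_left _ z1
      _ ≤ 2 * m := bound1 3 2 (by omega)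
  · -- part 2
    intro h91 h97
    rcases Nat.lt_or_ge p 5 with hp5 | hp5
    · -- p = 3
      have hp3' : p = 3 := by omega
      have h3k : ¬ (3 ∣ k) := by
        intro h; exact hpkk (hp3' ▸ h.mul_right _)
      have h3k1 : ¬ (3 ∣ (k+1)) := by
        intro h; exact hpkk (hp3' ▸ h.mul_left _)
      have hk9 : k % 9 = 4 := by
        have e1 : k % 3 ≠ 0 := fun h => h3k (Nat.dvd_iff_mod_eq_zero.mpr h)
        have e2 : (k+1) % 3 ≠ 0 := fun h => h3k1 (Nat.dvd_iff_mod_eq_zero.mpr h)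
        omega
      have h9U2 : ((p^2 : ℕ) : ℤ) ∣ shallitU k 2 := by
        rw [shallitU_two, hp3']
        obtain ⟨t, ht⟩ : ∃ t, k = 9 * t + 4 := ⟨k / 9, by omega⟩
        refine ⟨4 * t + 2, ?_⟩
        rw [ht]
        push_cast
        ring
      have hUnp2 : ((p^e : ℕ) : ℤ) ∣ shallitU k (2 * p^(e-2)) := by
        have base : (p:ℤ)^2 ∣ shallitU k 2 := by exact_mod_cast h9U2
        have := liftIter k p 2 2 hpp.pos (by norm_num) (by norm_num) base (e-2)
        rw [show (2:ℕ) + (e-2) = e by omega] at this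
        exact_mod_cast this
      have z2 : shallitZ k m ≤ N' * (2 * p^(e-2)) := by
        apply zle _ (Nat.mul_pos hN'pos (Nat.mul_pos (by norm_num) (pow_pos hpp.pos _)))
        exact mk (2 * p^(e-2)) _ hUnp2 ⟨N', by ring⟩ ⟨2 * p^(e-2), rfl⟩
      have hPsplit : p^e = p * p * p^(e-2) := by
        have h1 : p^e = p^(2+(e-2)) := by congr 1; omega
        rw [h1, pow_add, pow_two]
      calc 5 * shallitZ k m ≤ 5 * (N' * (2 * p^(e-2))) := Nat.mul_le_mul_left _ z2
        _ = 10 * (N' * p^(e-2)) := by ring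
        _ ≤ (3 * (p * p)) * (m' * p^(e-2)) := by
            rw [hp3']
            exact Nat.mul_le_mul (by norm_num) (Nat.mul_le_mul_right _ hN'le)
        _ = 3 * (p^e * m') := by rw [hPsplit]; ring
        _ = 3 * m := by rw [hmul]
    · -- p ≥ 5
      calc 5 * shallitZ k m ≤ 5 * (N' * (c * P1)) := Nat.mul_le_mul_left _ z1
        _ ≤ 3 * m := bound1 5 3 (by omega)
  · -- part 3
    intro hEm
    have h2m' : 2 ∣ m' := by
      have h2m : 2 ∣ m := even_iff_two_dvd.mp hEm
      rw [← hmul] at h2m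
      rcases (Nat.Prime.dvd_mul Nat.prime_two).mp h2m with h | h
      · exfalso
        have := Nat.Prime.dvd_of_dvd_pow Nat.prime_two h
        omega
      · exact h
    obtain ⟨N'', hN''⟩ := hN'even h2m'
    rcases Nat.even_or_odd c with hceven | hcodd
    · obtain ⟨c₀, hc₀⟩ := hceven
      have z3 : shallitZ k m ≤ N' * (c₀ * P1) := by
        apply zle _ (Nat.mul_pos hN'pos (Nat.mul_pos (by omega) hP1pos))
        refine mk (c * P1) _ hUnp1 ⟨N'', by rw [hN'', hc₀]; ring⟩ ⟨c₀ * P1, rfl⟩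
      calc 5 * shallitZ k m ≤ 5 * (N' * (c₀ * P1)) := Nat.mul_le_mul_left _ z3
        _ = (5 * c₀) * (N' * P1) := by ring
        _ ≤ (3 * p) * (m' * P1) :=
            Nat.mul_le_mul (by omega) (Nat.mul_le_mul_right _ hN'le)
        _ = 3 * (p^e * m') := by rw [hpe]; ring
        _ = 3 * m := by rw [hmul]
    · have hc1 : c % 2 = 1 := Nat.odd_iff.mp hcodd
      calc 5 * shallitZ k m ≤ 5 * (N' * (c * P1)) := Nat.mul_le_mul_left _ z1
        _ ≤ 3 * m := bound1 5 3 (by omega)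
  · -- part 4
    intro hEm hk5
    have h2m' : 2 ∣ m' := by
      have h2m : 2 ∣ m := even_iff_two_dvd.mp hEm
      rw [← hmul] at h2m
      rcases (Nat.Prime.dvd_mul Nat.prime_two).mp h2m with h | h
      · exfalso
        have := Nat.Prime.dvd_of_dvd_pow Nat.prime_two h
        omega
      · exact h
    obtain ⟨N'', hN''⟩ := hN'even h2m'
    by_cases hp5 : p = 5
    · -- p = 5 : then k ≡ 2 mod 5 and 5 ∣ U_2
      have h5k : ¬ (5 ∣ k) := fun h => hpkk (hp5 ▸ h.mul_right _)
      have h5k1 : ¬ (5 ∣ (k+1)) := fun h => hpkk (hp5 ▸ h.mul_left _)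
      have hk52 : k % 5 = 2 := by
        have e1 : k % 5 ≠ 0 := fun h => h5k (Nat.dvd_iff_mod_eq_zero.mpr h)
        have e2 : (k+1) % 5 ≠ 0 := fun h => h5k1 (Nat.dvd_iff_mod_eq_zero.mpr h)
        omega
      have h5U2 : (p : ℤ) ∣ shallitU k 2 := by
        rw [shallitU_two, hp5]
        obtain ⟨t, ht⟩ : ∃ t, k = 5 * t + 2 := ⟨k / 5, by omega⟩
        refine ⟨4 * t + 2, ?_⟩
        rw [ht]
        push_cast
        ring
      have hUnp4 : ((p^e : ℕ) : ℤ) ∣ shallitU k (2 * P1) := by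
        have base : (p:ℤ)^1 ∣ shallitU k 2 := by simpa using h5U2
        have := liftIter k p 2 1 hpp.pos (by norm_num) le_rfl base (e-1)
        rw [show (1:ℕ) + (e-1) = e by omega] at this
        exact_mod_cast this
      have z4 : shallitZ k m ≤ N' * P1 := by
        apply zle _ (Nat.mul_pos hN'pos hP1pos)
        refine mk (2 * P1) _ hUnp4 ⟨N'', by rw [hN'']; ring⟩ ⟨P1, rfl⟩
      calc 13 * shallitZ k m ≤ 13 * (N' * P1) := Nat.mul_le_mul_left _ z4
        _ ≤ 13 * (m' * P1) := Nat.mul_le_mul_left _ (Nat.mul_le_mul_right _ hN'le)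
        _ ≤ (7 * p) * (m' * P1) := by
            rw [hp5]
            exact Nat.mul_le_mul_right _ (by norm_num)
        _ = 7 * (p^e * m') := by rw [hpe]; ring
        _ = 7 * m := by rw [hmul]
    · rcases Nat.even_or_odd c with hceven | hcodd
      · obtain ⟨c₀, hc₀⟩ := hceven
        have z3 : shallitZ k m ≤ N' * (c₀ * P1) := by
          apply zle _ (Nat.mul_pos hN'pos (Nat.mul_pos (by omega) hP1pos))
          refine mk (c * P1) _ hUnp1 ⟨N'', by rw [hN'', hc₀]; ring⟩ ⟨c₀ * P1, rfl⟩
        calc 13 * shallitZ k m ≤ 13 * (N' * (c₀ * P1)) := Nat.mul_le_mul_left _ z3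
          _ = (13 * c₀) * (N' * P1) := by ring
          _ ≤ (7 * p) * (m' * P1) :=
              Nat.mul_le_mul (by omega) (Nat.mul_le_mul_right _ hN'le)
          _ = 7 * (p^e * m') := by rw [hpe]; ring
          _ = 7 * m := by rw [hmul]
      · have hc1 : c % 2 = 1 := Nat.odd_iff.mp hcodd
        have hp9 : p ≠ 9 := by
          intro h
          rw [h] at hpp
          norm_num at hpp
        calc 13 * shallitZ k m ≤ 13 * (N' * (c * P1)) := Nat.mul_le_mul_left _ z1
          _ ≤ 7 * m := bound1 13 7 (by omega)
end
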